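/- arXiv:1703.10716 — 4 statements merged into one kernel-verified Lean document; each statement's English description precedes it below -/
import Mathlib

section
/- Let {X_n} be i.i.d. random variables such that (log max_{1≤k≤n} X_k)/(log n) →_P 1/ρ for some 0 < ρ < ∞. Then for every 0 < y < 1/ρ, (log(−ln P((log max_{1≤k≤n} X_k)/(log n) ≤ 1/ρ − y)))/(ln n) → ρy as n → ∞. -/
open MeasureTheory ProbabilityTheory Filter
open scoped ENNReal

/-- `log x = ln (e ∨ x)` as in the paper. -/
noncomputable def Log (x : ℝ) : ℝ := Real.log (max (Real.exp 1) x)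

/-- `pmax X n ω = max_{1 ≤ k ≤ n} X_k(ω)` (indexed `0,…,n-1`), junk value at `n = 0`. -/
noncomputable def pmax {Ω : Type*} (X : ℕ → Ω → ℝ) (n : ℕ) (ω : Ω) : ℝ :=
  if h : n = 0 then X 0 ω
  else (Finset.range n).sup' (Finset.nonempty_range_iff.mpr h) fun k => X k ω

lemma aux_natCast_rpow_atTop {θ : ℝ} (hθ : 0 < θ) :
    Tendsto (fun n : ℕ => (n:ℝ)^θ) atTop atTop :=
  (tendsto_rpow_atTop hθ).comp tendsto_natCast_atTop_atTop

lemma aux_ceil_tendsto {θ : ℝ} (hθ : 0 < θ) :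
    Tendsto (fun n : ℕ => ⌈(n:ℝ)^θ⌉₊) atTop atTop := by
  rw [tendsto_atTop]
  intro b
  filter_upwards [(aux_natCast_rpow_atTop hθ).eventually_ge_atTop (b:ℝ)] with n hn
  exact_mod_cast hn.trans (Nat.le_ceil _)

lemma aux_lower (L : ℝ → ℝ) (t0 : ℝ) (hL0 : ∀ t, 0 ≤ L t)
    (hanti : ∀ s t : ℝ, t0 ≤ s → s ≤ t → L t ≤ L s)
    (ρ y : ℝ) (hρ : 0 < ρ) (hy : 0 < y) (hyρ : y < 1/ρ)
    (hA : ∀ ε : ℝ, 0 < ε → ε < 1/ρ →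
      Tendsto (fun n : ℕ => (n:ℝ) * L ((n:ℝ)^(1/ρ - ε))) atTop atTop)
    {ε : ℝ} (hε : 0 < ε) :
    ∀ᶠ n : ℕ in atTop, (n:ℝ)^(ρ*y - ε) ≤ (n:ℝ) * L ((n:ℝ)^(1/ρ - y)) := by
  set ε' : ℝ := min (y/2) (ε/ρ) with hε'def
  have hε'0 : 0 < ε' := lt_min (by linarith) (div_pos hε hρ)
  have hε'y : ε' < y := (min_le_left _ _).trans_lt (by linarith)
  have hε'ρ : ε' < 1/ρ := hε'y.trans hyρ
  have hε'ε : ρ * ε' ≤ ε := by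
    have : ε' ≤ ε/ρ := min_le_right _ _
    calc ρ * ε' ≤ ρ * (ε/ρ) := by nlinarith
    _ = ε := by field_simp
  set β : ℝ := 1/ρ - ε' with hβdef
  set α : ℝ := 1/ρ - y with hαdef
  have hβ : 0 < β := by simp only [hβdef]; linarith
  have hα : 0 < α := by simp only [hαdef]; linarith
  have hαβ : α < β := by simp only [hαdef, hβdef]; linarith
  set θ : ℝ := α / β with hθdef
  have hθ : 0 < θ := div_pos hα hβ
  have hθ1 : θ < 1 := (div_lt_one hβ).mpr hαβ
  have hθβ : θ * β = α := div_mul_cancel₀ _ hβ.ne'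
  have h1θ : ρ*y - ε ≤ 1 - θ := by
    have h1 : 1 - θ = (y - ε') / β := by
      rw [hθdef]; field_simp; simp only [hαdef, hβdef]; ring
    have h2 : ρ * (y - ε') ≤ (y - ε') / β := by
      rw [le_div_iff₀ hβ]
      have hβρ : ρ * β ≤ 1 := by
        have : β ≤ 1/ρ := by simp only [hβdef]; linarith
        calc ρ * β ≤ ρ * (1/ρ) := by nlinarith
        _ = 1 := by field_simp
      nlinarith
    rw [h1]
    nlinarith
  set m : ℕ → ℕ := fun n => ⌈(n:ℝ)^θ⌉₊ with hmdef
  have htm : Tendsto m atTop atTop := aux_ceil_tendsto hθ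
  have hcompm : Tendsto (fun n => ((m n):ℝ) * L (((m n):ℝ)^β)) atTop atTop :=
    (hA ε' hε'0 hε'ρ).comp htm
  filter_upwards [hcompm.eventually_ge_atTop 2,
    (aux_natCast_rpow_atTop hα).eventually_ge_atTop t0,
    (aux_natCast_rpow_atTop hθ).eventually_ge_atTop 1,
    eventually_ge_atTop 1] with n h1 h2 h4 h5
  have hn0 : (0:ℝ) < n := by exact_mod_cast h5
  have hn1 : (1:ℝ) ≤ n := by exact_mod_cast h5
  have hnθ : (0:ℝ) < (n:ℝ)^θ := by positivity
  have hmle : ((m n):ℝ) ≤ 2 * (n:ℝ)^θ := by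
    have := (Nat.ceil_lt_add_one (le_of_lt hnθ)).le
    calc ((m n):ℝ) ≤ (n:ℝ)^θ + 1 := this
    _ ≤ 2 * (n:ℝ)^θ := by linarith
  have hnακ : (n:ℝ)^α ≤ ((m n):ℝ)^β := by
    calc (n:ℝ)^α = ((n:ℝ)^θ)^β := by rw [← Real.rpow_mul hn0.le, hθβ]
    _ ≤ ((m n):ℝ)^β := Real.rpow_le_rpow (le_of_lt hnθ) (Nat.le_ceil _) hβ.le
  have hLge : L (((m n):ℝ)^β) ≤ L ((n:ℝ)^α) := hanti _ _ h2 hnακ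
  have hLlb : ((n:ℝ)^θ)⁻¹ ≤ L (((m n):ℝ)^β) := by
    have h6 : 2 ≤ 2 * (n:ℝ)^θ * L (((m n):ℝ)^β) :=
      le_trans h1 (mul_le_mul_of_nonneg_right hmle (hL0 _))
    rw [inv_le_iff_one_le_mul₀ hnθ]
    nlinarith
  calc (n:ℝ)^(ρ*y - ε) ≤ (n:ℝ)^(1 - θ) := Real.rpow_le_rpow_of_exponent_le hn1 h1θ
  _ = (n:ℝ) * ((n:ℝ)^θ)⁻¹ := by
      rw [Real.rpow_sub hn0, Real.rpow_one, div_eq_mul_inv]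
  _ ≤ (n:ℝ) * L (((m n):ℝ)^β) := mul_le_mul_of_nonneg_left hLlb hn0.le
  _ ≤ (n:ℝ) * L ((n:ℝ)^(1/ρ - y)) := mul_le_mul_of_nonneg_left hLge hn0.le

set_option maxHeartbeats 1000000 in
lemma aux_upper (L : ℝ → ℝ) (t0 : ℝ) (hL0 : ∀ t, 0 ≤ L t)
    (hanti : ∀ s t : ℝ, t0 ≤ s → s ≤ t → L t ≤ L s)
    (ρ y : ℝ) (hρ : 0 < ρ) (hy : 0 < y) (hyρ : y < 1/ρ)
    (hB : ∀ ε : ℝ, 0 < ε →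
      Tendsto (fun n : ℕ => (n:ℝ) * L ((n:ℝ)^(1/ρ + ε))) atTop (nhds 0))
    {ε : ℝ} (hε : 0 < ε) :
    ∀ᶠ n : ℕ in atTop, (n:ℝ) * L ((n:ℝ)^(1/ρ - y)) ≤ (n:ℝ)^(ρ*y + ε) := by
  set ε' : ℝ := ε/(2*ρ) with hε'def
  have hε'0 : 0 < ε' := by positivity
  set β : ℝ := 1/ρ + ε' with hβdef
  set α : ℝ := 1/ρ - y with hαdef
  have hβ : 0 < β := by simp only [hβdef]; positivity
  have hα : 0 < α := by simp only [hαdef]; linarith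
  have hαβ : α < β := by simp only [hαdef, hβdef]; linarith
  set θ : ℝ := α / β with hθdef
  have hθ : 0 < θ := div_pos hα hβ
  have hθ1 : θ < 1 := (div_lt_one hβ).mpr hαβ
  have hθβ : θ * β = α := div_mul_cancel₀ _ hβ.ne'
  have h1θ : 1 - θ ≤ ρ*y + ε/2 := by
    have h1 : 1 - θ = (y + ε') / β := by
      rw [hθdef]; field_simp; simp only [hαdef, hβdef]; ring
    have h2 : (y + ε') / β ≤ ρ * (y + ε') := by
      rw [div_le_iff₀ hβ]
      have hβρ : 1 ≤ ρ * β := by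
        have : 1/ρ ≤ β := by simp only [hβdef]; linarith
        calc (1:ℝ) = ρ * (1/ρ) := by field_simp
        _ ≤ ρ * β := by nlinarith
      nlinarith
    have h3 : ρ * (y + ε') = ρ*y + ε/2 := by
      simp only [hε'def]; field_simp
    linarith [h1 ▸ h2.trans_eq h3]
  set m : ℕ → ℕ := fun n => ⌊(n:ℝ)^θ⌋₊ with hmdef
  have htm : Tendsto m atTop atTop :=
    tendsto_nat_floor_atTop.comp (aux_natCast_rpow_atTop hθ)
  have hcompm : Tendsto (fun n => ((m n):ℝ) * L (((m n):ℝ)^β)) atTop (nhds 0) :=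
    (hB ε' hε'0).comp htm
  have hmR : Tendsto (fun n => ((m n):ℝ)) atTop atTop :=
    tendsto_natCast_atTop_atTop.comp htm
  have hmβ : Tendsto (fun n => ((m n):ℝ)^β) atTop atTop :=
    (tendsto_rpow_atTop hβ).comp hmR
  filter_upwards [hcompm.eventually (gt_mem_nhds one_pos),
    hmβ.eventually_ge_atTop t0,
    (aux_natCast_rpow_atTop hθ).eventually_ge_atTop 2,
    (aux_natCast_rpow_atTop (by positivity : (0:ℝ) < ε/2)).eventually_ge_atTop 2,
    eventually_ge_atTop 1] with n h1 h2 h3 h6 h5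
  have hn0 : (0:ℝ) < n := by exact_mod_cast h5
  have hn1 : (1:ℝ) ≤ n := by exact_mod_cast h5
  have hnθ : (0:ℝ) < (n:ℝ)^θ := by positivity
  have hmge : (n:ℝ)^θ / 2 ≤ ((m n):ℝ) := by
    have := Nat.sub_one_lt_floor ((n:ℝ)^θ)
    have : (n:ℝ)^θ - 1 ≤ ((m n):ℝ) := le_of_lt this
    linarith
  have hm0 : (0:ℝ) < ((m n):ℝ) := by
    calc (0:ℝ) < (n:ℝ)^θ / 2 := by positivity
    _ ≤ _ := hmge
  have hmβle : ((m n):ℝ)^β ≤ (n:ℝ)^α := by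
    calc ((m n):ℝ)^β ≤ ((n:ℝ)^θ)^β :=
        Real.rpow_le_rpow hm0.le (Nat.floor_le hnθ.le) hβ.le
    _ = (n:ℝ)^α := by rw [← Real.rpow_mul hn0.le, hθβ]
  have hLle : L ((n:ℝ)^α) ≤ L (((m n):ℝ)^β) := hanti _ _ h2 hmβle
  have hLub : L (((m n):ℝ)^β) ≤ 2 * ((n:ℝ)^θ)⁻¹ := by
    have hL1 : L (((m n):ℝ)^β) ≤ 1 / ((m n):ℝ) := by
      rw [le_div_iff₀ hm0]
      nlinarith [h1, hL0 (((m n):ℝ)^β)]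
    have : 1 / ((m n):ℝ) ≤ 2 * ((n:ℝ)^θ)⁻¹ := by
      rw [div_le_iff₀ hm0]
      have h7 : ((n:ℝ)^θ)⁻¹ * ((n:ℝ)^θ) = 1 := inv_mul_cancel₀ hnθ.ne'
      nlinarith [hmge, hnθ]
    linarith
  have hstep1 : (n:ℝ) * L ((n:ℝ)^(1/ρ - y)) ≤ (n:ℝ) * (2 * ((n:ℝ)^θ)⁻¹) :=
    mul_le_mul_of_nonneg_left (hLle.trans hLub) hn0.le
  calc (n:ℝ) * L ((n:ℝ)^(1/ρ - y)) ≤ (n:ℝ) * (2 * ((n:ℝ)^θ)⁻¹) := hstep1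
  _ = 2 * (n:ℝ)^(1 - θ) := by
      rw [Real.rpow_sub hn0, Real.rpow_one, div_eq_mul_inv]; ring
  _ ≤ 2 * (n:ℝ)^(ρ*y + ε/2) := by
      have := Real.rpow_le_rpow_of_exponent_le hn1 h1θ
      linarith
  _ ≤ (n:ℝ)^(ε/2) * (n:ℝ)^(ρ*y + ε/2) := by
      have : (0:ℝ) ≤ (n:ℝ)^(ρ*y + ε/2) := by positivity
      nlinarith [h6]
  _ = (n:ℝ)^(ρ*y + ε) := by rw [← Real.rpow_add hn0]; ring_nf

lemma aux_prod {Ω : Type*} [MeasurableSpace Ω] (μ : Measure Ω) [IsProbabilityMeasure μ]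
    (X : ℕ → Ω → ℝ)
    (hindep : iIndepFun X μ)
    (hident : ∀ n, IdentDistrib (X n) (X 0) μ μ)
    {n : ℕ} (hn : n ≠ 0) (t : ℝ) :
    μ {ω | pmax X n ω ≤ t} = μ {ω | X 0 ω ≤ t} ^ n := by
  have hset : {ω | pmax X n ω ≤ t} = ⋂ k ∈ Finset.range n, X k ⁻¹' Set.Iic t := by
    ext ω
    simp [pmax, hn, Finset.sup'_le_iff]
  rw [hset, hindep.meas_biInter (fun i _ => ⟨Set.Iic t, measurableSet_Iic, rfl⟩)]
  have : ∀ k, μ (X k ⁻¹' Set.Iic t) = μ (X 0 ⁻¹' Set.Iic t) :=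
    fun k => (hident k).measure_mem_eq measurableSet_Iic
  rw [Finset.prod_congr rfl (fun k _ => this k), Finset.prod_const, Finset.card_range]
  rfl

/-- `Log x ≤ c ↔ x ≤ exp c`, for `c ≥ 1`. -/
lemma aux_Log_le {x c : ℝ} (hc : 1 ≤ c) : Log x ≤ c ↔ x ≤ Real.exp c := by
  have hpos : 0 < max (Real.exp 1) x := lt_max_of_lt_left (Real.exp_pos 1)
  rw [Log, Real.log_le_iff_le_exp hpos, max_le_iff]
  constructor
  · exact fun h => h.2
  · exact fun h => ⟨Real.exp_le_exp.mpr hc, h⟩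

lemma aux_Logn {n : ℕ} (hn : 3 ≤ n) : Log (n:ℝ) = Real.log n := by
  rw [Log, max_eq_right]
  calc Real.exp 1 ≤ 3 := by
        have := Real.exp_one_lt_d9
        norm_num at this ⊢
        linarith
  _ ≤ (n:ℝ) := by exact_mod_cast hn

lemma aux_logn_pos {n : ℕ} (hn : 3 ≤ n) : 0 < Real.log n :=
  Real.log_pos (by exact_mod_cast Nat.lt_of_lt_of_le (by norm_num) hn)


set_option maxHeartbeats 1000000 in
theorem stmt12 {Ω : Type*} [MeasurableSpace Ω] (μ : Measure Ω) [IsProbabilityMeasure μ]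
    (X : ℕ → Ω → ℝ) (hmeas : ∀ n, Measurable (X n))
    (hindep : iIndepFun X μ)
    (hident : ∀ n, IdentDistrib (X n) (X 0) μ μ)
    (ρ : ℝ) (hρ : 0 < ρ)
    (hconv : ∀ ε : ℝ, 0 < ε →
        Tendsto (fun n : ℕ => μ {ω | ε ≤ |Log (pmax X n ω) / Log n - 1 / ρ|}) atTop (nhds 0)) :
    ∀ y : ℝ, 0 < y → y < 1 / ρ →
      Tendsto (fun n : ℕ =>
          Log (-Real.log ((μ {ω | Log (pmax X n ω) / Log n ≤ 1 / ρ - y}).toReal)) / Real.log n)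
        atTop (nhds (ρ * y)) := by
  intro y hy hyρ
  set g : ℝ → ℝ := fun t => (μ {ω | X 0 ω ≤ t}).toReal with hgdef
  have hgmono : Monotone g := fun s t hst =>
    ENNReal.toReal_mono (measure_ne_top _ _)
      (measure_mono (fun ω hω => le_trans hω hst))
  have hg0 : ∀ t, 0 ≤ g t := fun t => ENNReal.toReal_nonneg
  have hg1 : ∀ t, g t ≤ 1 := fun t => by
    have h := prob_le_one (μ := μ) (s := {ω | X 0 ω ≤ t})
    have := ENNReal.toReal_mono (by simp) h
    simpa using this
  -- the eventual identification of the distribution function of the max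
  have hev : ∀ γ : ℝ, 0 < γ → ∀ᶠ n : ℕ in atTop,
      (μ {ω | Log (pmax X n ω) / Log n ≤ γ}).toReal = g ((n:ℝ)^γ) ^ n := by
    intro γ hγ
    have hlog : Tendsto (fun n : ℕ => γ * Real.log n) atTop atTop :=
      (Real.tendsto_log_atTop.comp tendsto_natCast_atTop_atTop).const_mul_atTop hγ
    filter_upwards [hlog.eventually_ge_atTop 1, eventually_ge_atTop 3] with n hn1 hn3
    have hn0 : n ≠ 0 := by omega
    have hset : {ω | Log (pmax X n ω) / Log (n:ℝ) ≤ γ} = {ω | pmax X n ω ≤ (n:ℝ)^γ} := by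
      ext ω
      rw [Set.mem_setOf_eq, Set.mem_setOf_eq, aux_Logn hn3,
        div_le_iff₀ (aux_logn_pos hn3), aux_Log_le hn1,
        Real.rpow_def_of_pos (by exact_mod_cast Nat.pos_of_ne_zero hn0), mul_comm]
    rw [hset, aux_prod μ X hindep hident hn0, ENNReal.toReal_pow]
  -- lower tail tends to 0
  have hA1 : ∀ ε : ℝ, 0 < ε → ε < 1/ρ →
      Tendsto (fun n : ℕ => g ((n:ℝ)^(1/ρ - ε)) ^ n) atTop (nhds 0) := by
    intro ε hε hερ
    have hsub : ∀ n : ℕ, {ω | Log (pmax X n ω) / Log (n:ℝ) ≤ 1/ρ - ε} ⊆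
        {ω | ε ≤ |Log (pmax X n ω) / Log (n:ℝ) - 1/ρ|} := by
      intro n ω hω
      rw [Set.mem_setOf_eq] at hω ⊢
      exact le_abs.mpr (Or.inr (by linarith))
    have h0 : Tendsto (fun n : ℕ => μ {ω | Log (pmax X n ω) / Log (n:ℝ) ≤ 1/ρ - ε})
        atTop (nhds 0) :=
      tendsto_of_tendsto_of_tendsto_of_le_of_le tendsto_const_nhds (hconv ε hε)
        (fun n => zero_le) (fun n => measure_mono (hsub n))
    have h1 : Tendsto (fun n : ℕ =>
        (μ {ω | Log (pmax X n ω) / Log (n:ℝ) ≤ 1/ρ - ε}).toReal) atTop (nhds 0) := by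
      have := (ENNReal.tendsto_toReal (a := 0) (by simp)).comp h0
      simpa [Function.comp_def] using this
    exact h1.congr' (hev (1/ρ - ε) (by linarith))
  -- upper tail: probability tends to 1
  have hB1 : ∀ ε : ℝ, 0 < ε →
      Tendsto (fun n : ℕ => g ((n:ℝ)^(1/ρ + ε)) ^ n) atTop (nhds 1) := by
    intro ε hε
    have hB0 : Tendsto (fun n : ℕ =>
        (μ {ω | ε ≤ |Log (pmax X n ω) / Log (n:ℝ) - 1/ρ|}).toReal) atTop (nhds 0) := by
      have := (ENNReal.tendsto_toReal (a := 0) (by simp)).comp (hconv ε hε)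
      simpa [Function.comp_def] using this
    have hl : Tendsto (fun n : ℕ =>
        1 - (μ {ω | ε ≤ |Log (pmax X n ω) / Log (n:ℝ) - 1/ρ|}).toReal) atTop (nhds 1) := by
      have := (tendsto_const_nhds (x := (1:ℝ)) (f := atTop)).sub hB0
      simpa using this
    have hlog : Tendsto (fun n : ℕ => (1/ρ + ε) * Real.log n) atTop atTop :=
      (Real.tendsto_log_atTop.comp tendsto_natCast_atTop_atTop).const_mul_atTop
        (by positivity)
    have hlb : ∀ᶠ n : ℕ in atTop,
        1 - (μ {ω | ε ≤ |Log (pmax X n ω) / Log (n:ℝ) - 1/ρ|}).toReal ≤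
          g ((n:ℝ)^(1/ρ + ε)) ^ n := by
      filter_upwards [hlog.eventually_ge_atTop 1, eventually_ge_atTop 3] with n hn1 hn3
      have hn0 : n ≠ 0 := by omega
      set A := {ω | pmax X n ω ≤ (n:ℝ)^(1/ρ + ε)} with hAdef
      set B := {ω | ε ≤ |Log (pmax X n ω) / Log (n:ℝ) - 1/ρ|} with hBdef
      have hcover : (Set.univ : Set Ω) ⊆ A ∪ B := by
        intro ω _
        by_cases hωB : ε ≤ |Log (pmax X n ω) / Log (n:ℝ) - 1/ρ|
        · exact Or.inr hωB
        · left
          push_neg at hωB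
          have h2 := (abs_lt.mp hωB).2
          have h3 : Log (pmax X n ω) / Log (n:ℝ) ≤ 1/ρ + ε := by linarith
          rw [aux_Logn hn3, div_le_iff₀ (aux_logn_pos hn3)] at h3
          rw [aux_Log_le hn1] at h3
          show pmax X n ω ≤ (n:ℝ)^(1/ρ + ε)
          rw [Real.rpow_def_of_pos (by exact_mod_cast Nat.pos_of_ne_zero hn0), mul_comm]
          exact h3
      have h1le : (1:ℝ≥0∞) ≤ μ A + μ B := by
        calc (1:ℝ≥0∞) = μ Set.univ := (measure_univ (μ := μ)).symm
        _ ≤ μ (A ∪ B) := measure_mono hcover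
        _ ≤ μ A + μ B := measure_union_le A B
      have h1leR : (1:ℝ) ≤ (μ A).toReal + (μ B).toReal := by
        have hfin : μ A + μ B ≠ ⊤ :=
          ENNReal.add_ne_top.mpr ⟨measure_ne_top _ _, measure_ne_top _ _⟩
        have := ENNReal.toReal_mono hfin h1le
        rwa [ENNReal.toReal_one, ENNReal.toReal_add (measure_ne_top _ _)
          (measure_ne_top _ _)] at this
      have hAval : (μ A).toReal = g ((n:ℝ)^(1/ρ + ε)) ^ n := by
        rw [hAdef, aux_prod μ X hindep hident hn0, ENNReal.toReal_pow]
      linarith [h1leR, hAval.symm.le]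
    have hub : ∀ᶠ n : ℕ in atTop, g ((n:ℝ)^(1/ρ + ε)) ^ n ≤ 1 :=
      Filter.Eventually.of_forall (fun n => pow_le_one₀ (hg0 _) (hg1 _))
    exact tendsto_of_tendsto_of_tendsto_of_le_of_le' hl tendsto_const_nhds hlb hub
  -- positivity of g for large arguments
  obtain ⟨n₀, hn₀1, hn₀g⟩ : ∃ n₀ : ℕ, 1 ≤ n₀ ∧ (1/2 : ℝ) ≤ g ((n₀:ℝ)^(1/ρ + 1)) ^ n₀ := by
    have := (hB1 1 one_pos).eventually (lt_mem_nhds (by norm_num : (1/2:ℝ) < 1))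
    obtain ⟨n₀, hn₀⟩ := (this.and (eventually_ge_atTop 1)).exists
    exact ⟨n₀, hn₀.2, hn₀.1.le⟩
  set t0 : ℝ := (n₀:ℝ)^(1/ρ + 1) with ht0def
  have hc : 0 < g t0 := by
    by_contra h
    push_neg at h
    have hg00 : g t0 = 0 := le_antisymm h (hg0 _)
    rw [hg00] at hn₀g
    rw [zero_pow (by omega)] at hn₀g
    norm_num at hn₀g
  -- the log-tail function
  set L : ℝ → ℝ := fun t => -Real.log (g t) with hLdef
  have hL0 : ∀ t, 0 ≤ L t := fun t =>
    neg_nonneg.mpr (Real.log_nonpos (hg0 t) (hg1 t))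
  have hanti : ∀ s t : ℝ, t0 ≤ s → s ≤ t → L t ≤ L s := by
    intro s t hs hst
    have hgs : 0 < g s := lt_of_lt_of_le hc (hgmono hs)
    exact neg_le_neg (Real.log_le_log hgs (hgmono hst))
  have hgpos : ∀ {γ : ℝ}, 0 < γ → ∀ᶠ n : ℕ in atTop, 0 < g ((n:ℝ)^γ) := by
    intro γ hγ
    filter_upwards [(aux_natCast_rpow_atTop hγ).eventually_ge_atTop t0] with n hn
    exact lt_of_lt_of_le hc (hgmono hn)
  -- transfer the convergences to L
  have hA : ∀ ε : ℝ, 0 < ε → ε < 1/ρ →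
      Tendsto (fun n : ℕ => (n:ℝ) * L ((n:ℝ)^(1/ρ - ε))) atTop atTop := by
    intro ε hε hερ
    have hin : Tendsto (fun n : ℕ => g ((n:ℝ)^(1/ρ - ε)) ^ n) atTop (nhdsWithin 0 (Set.Ioi 0)) := by
      rw [tendsto_nhdsWithin_iff]
      refine ⟨hA1 ε hε hερ, ?_⟩
      filter_upwards [hgpos (by linarith : (0:ℝ) < 1/ρ - ε)] with n hn
      exact pow_pos hn n
    have hlog : Tendsto (fun n : ℕ => Real.log (g ((n:ℝ)^(1/ρ - ε)) ^ n)) atTop atBot :=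
      Real.tendsto_log_nhdsGT_zero.comp hin
    have heq : (fun n : ℕ => (n:ℝ) * L ((n:ℝ)^(1/ρ - ε))) =
        fun n : ℕ => -Real.log (g ((n:ℝ)^(1/ρ - ε)) ^ n) := by
      funext n
      rw [Real.log_pow]
      simp [hLdef]
    rw [heq]
    exact tendsto_neg_atTop_iff.mpr hlog
  have hB : ∀ ε : ℝ, 0 < ε →
      Tendsto (fun n : ℕ => (n:ℝ) * L ((n:ℝ)^(1/ρ + ε))) atTop (nhds 0) := by
    intro ε hε
    have hlog : Tendsto (fun n : ℕ => Real.log (g ((n:ℝ)^(1/ρ + ε)) ^ n)) atTop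
        (nhds 0) := by
      have h1 := ((Real.continuousAt_log one_ne_zero).tendsto).comp (hB1 ε hε)
      rw [Real.log_one] at h1
      exact h1
    have heq : (fun n : ℕ => (n:ℝ) * L ((n:ℝ)^(1/ρ + ε))) =
        fun n : ℕ => -Real.log (g ((n:ℝ)^(1/ρ + ε)) ^ n) := by
      funext n
      rw [Real.log_pow]
      simp [hLdef]
    rw [heq]
    simpa using hlog.neg
  -- the two-sided bounds
  have hLow : ∀ ε : ℝ, 0 < ε → ∀ᶠ n : ℕ in atTop,
      (n:ℝ)^(ρ*y - ε) ≤ (n:ℝ) * L ((n:ℝ)^(1/ρ - y)) :=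
    fun ε hε => aux_lower L t0 hL0 hanti ρ y hρ hy hyρ hA hε
  have hUpp : ∀ ε : ℝ, 0 < ε → ∀ᶠ n : ℕ in atTop,
      (n:ℝ) * L ((n:ℝ)^(1/ρ - y)) ≤ (n:ℝ)^(ρ*y + ε) :=
    fun ε hε => aux_upper L t0 hL0 hanti ρ y hρ hy hyρ hB hε
  have hρy : 0 < ρ * y := by positivity
  -- conclusion
  rw [Metric.tendsto_atTop]
  intro ε hε
  set ε₂ : ℝ := min (ε/2) (ρ*y/2) with hε₂def
  have hε₂ : 0 < ε₂ := lt_min (by linarith) (by linarith)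
  have hεₑ : ∀ᶠ n : ℕ in atTop, Real.exp 1 ≤ (n:ℝ)^(ρ*y - ρ*y/2) :=
    (aux_natCast_rpow_atTop (by linarith)).eventually_ge_atTop _
  have hall : ∀ᶠ n : ℕ in atTop,
      dist (Log (-Real.log ((μ {ω | Log (pmax X n ω) / Log (n:ℝ) ≤ 1/ρ - y}).toReal)) /
        Real.log n) (ρ*y) < ε := by
    filter_upwards [hLow ε₂ hε₂, hUpp ε₂ hε₂, hLow (ρ*y/2) (by linarith), hεₑ,
      hev (1/ρ - y) (by linarith), eventually_ge_atTop 3] with n hlow hupp hlow2 he hgn hn3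
    have hn0 : (0:ℝ) < n := by
      have : (0:ℕ) < n := by omega
      exact_mod_cast this
    set h : ℝ := (n:ℝ) * L ((n:ℝ)^(1/ρ - y)) with hhdef
    have hhe : Real.exp 1 ≤ h := le_trans he hlow2
    have hh0 : 0 < h := lt_of_lt_of_le (Real.exp_pos 1) hhe
    have hlogeq :
        -Real.log ((μ {ω | Log (pmax X n ω) / Log (n:ℝ) ≤ 1/ρ - y}).toReal) = h := by
      rw [hgn, Real.log_pow]
      simp only [hhdef, hLdef]
      ring
    have hLogh : Log h = Real.log h := by rw [Log, max_eq_right hhe]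
    have hlogn := aux_logn_pos hn3
    have hb1 : (ρ*y - ε₂) * Real.log n ≤ Real.log h := by
      have := Real.log_le_log (by positivity) hlow
      rwa [Real.log_rpow hn0] at this
    have hb2 : Real.log h ≤ (ρ*y + ε₂) * Real.log n := by
      have := Real.log_le_log hh0 hupp
      rwa [Real.log_rpow hn0] at this
    have hf1 : ρ*y - ε₂ ≤ Real.log h / Real.log n := by
      rw [le_div_iff₀ hlogn]; exact hb1
    have hf2 : Real.log h / Real.log n ≤ ρ*y + ε₂ := by
      rw [div_le_iff₀ hlogn]; exact hb2
    rw [hlogeq, hLogh, Real.dist_eq]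
    have habs : |Real.log h / Real.log n - ρ*y| ≤ ε₂ :=
      abs_le.mpr ⟨by linarith, by linarith⟩
    have hε₂ε : ε₂ ≤ ε/2 := min_le_left _ _
    linarith
  obtain ⟨N, hN⟩ := eventually_atTop.mp hall
  exact ⟨N, hN⟩
end

section
/- Let {X_n} be i.i.d. with P(X > x) ~ (log x)^τ h(x)/x^ρ as x → ∞, where 0 < ρ < ∞, τ ∈ ℝ, and h : [0,∞) → (0,∞) is monotone with h(x²)/h(x) → 1. Then for every real x, P(log max_{1≤k≤n} X_k ≤ (ln n + τ ln ln n + ln h(n) − τ ln ρ + x)/ρ) → exp(−e^{−x}). -/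
open MeasureTheory ProbabilityTheory Filter
open scoped ENNReal

section Helpers

lemma tendsto_loglog_div_log :
    Tendsto (fun x : ℝ => Real.log (Real.log x) / Real.log x) atTop (nhds 0) :=
  (Real.isLittleO_log_id_atTop.tendsto_div_nhds_zero).comp Real.tendsto_log_atTop

lemma chainBound (f : ℝ → ℝ) (M : ℝ) (hM : Real.exp 1 ≤ M)
    (hmono : ∀ a b, M ≤ a → a ≤ b → f a ≤ f b)
    (hdouble : ∀ y, M ≤ y → f (y ^ 2) ≤ 2 * f y)
    (hfM : 0 < f M) :
    ∀ x, M ≤ x → f x ≤ (2 * f M / Real.log M) * Real.log x := by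
  have hM1 : (1:ℝ) < M := lt_of_lt_of_le (by
    have := Real.add_one_le_exp (1:ℝ); linarith) hM
  have hM0 : (0:ℝ) < M := lt_trans one_pos hM1
  have hlogM : (1:ℝ) ≤ Real.log M := by
    have := Real.log_le_log (Real.exp_pos 1) hM
    rwa [Real.log_exp] at this
  have hlogM0 : (0:ℝ) < Real.log M := lt_of_lt_of_le one_pos hlogM
  set m : ℕ → ℝ := fun k => M ^ ((2:ℝ) ^ k) with hm
  have hm0 : m 0 = M := by simp [hm]
  have hmM : ∀ k, M ≤ m k := by
    intro k
    calc M = M ^ (1:ℝ) := (Real.rpow_one M).symm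
    _ ≤ M ^ ((2:ℝ) ^ k) := Real.rpow_le_rpow_of_exponent_le hM1.le (one_le_pow₀ one_le_two)
  have hmsq : ∀ k, m (k + 1) = (m k) ^ 2 := by
    intro k
    simp only [hm]
    rw [← Real.rpow_natCast (M ^ ((2:ℝ) ^ k)) 2, ← Real.rpow_mul hM0.le]
    norm_num [pow_succ]
  have hfmk : ∀ k, f (m k) ≤ 2 ^ k * f M := by
    intro k
    induction k with
    | zero => simp [hm0]
    | succ k ih =>
      have h1 : f (m (k + 1)) ≤ 2 * f (m k) := by
        rw [hmsq k]; exact hdouble (m k) (hmM k)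
      calc f (m (k+1)) ≤ 2 * f (m k) := h1
      _ ≤ 2 * (2 ^ k * f M) := by linarith
      _ = 2 ^ (k+1) * f M := by ring
  have hlogmk : ∀ k, Real.log (m k) = 2 ^ k * Real.log M := fun k => Real.log_rpow hM0 _
  intro x hx
  have hx0 : (0:ℝ) < x := lt_of_lt_of_le hM0 hx
  have hlogx : Real.log M ≤ Real.log x := Real.log_le_log hM0 hx
  have hex : ∃ k, x ≤ m k := by
    obtain ⟨k, hk⟩ := pow_unbounded_of_one_lt (Real.log x / Real.log M) (one_lt_two (α := ℝ))
    refine ⟨k, ?_⟩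
    have h2 : Real.log x ≤ 2 ^ k * Real.log M := by
      rw [div_lt_iff₀ hlogM0] at hk; linarith
    have := Real.exp_le_exp.mpr h2
    rw [Real.exp_log hx0] at this
    calc x ≤ Real.exp (2 ^ k * Real.log M) := this
    _ = m k := by simp only [hm]; rw [Real.rpow_def_of_pos hM0]; ring_nf
  classical
  set k := Nat.find hex with hkdef
  have hk : x ≤ m k := Nat.find_spec hex
  have h2k : (2:ℝ) ^ k ≤ 2 * Real.log x / Real.log M := by
    rcases Nat.eq_zero_or_pos k with h0 | hpos
    · rw [h0, pow_zero, le_div_iff₀ hlogM0]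
      linarith
    · obtain ⟨j, hj⟩ := Nat.exists_eq_succ_of_ne_zero hpos.ne'
      have hnot : ¬ x ≤ m j := Nat.find_min hex (by omega)
      push_neg at hnot
      have hlt : Real.log (m j) < Real.log x := Real.log_lt_log (lt_of_lt_of_le hM0 (hmM j)) hnot
      rw [hlogmk j] at hlt
      have : (2:ℝ) ^ j < Real.log x / Real.log M := by
        rw [lt_div_iff₀ hlogM0]; linarith
      rw [hj, pow_succ]
      rw [le_div_iff₀ hlogM0]
      calc (2:ℝ) ^ j * 2 * Real.log M = 2 * ((2:ℝ)^j * Real.log M) := by ring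
      _ ≤ 2 * Real.log x := by nlinarith
      _ = 2 * Real.log x := rfl
  calc f x ≤ f (m k) := hmono x (m k) hx hk
  _ ≤ 2 ^ k * f M := hfmk k
  _ ≤ (2 * Real.log x / Real.log M) * f M := mul_le_mul_of_nonneg_right h2k hfM.le
  _ = (2 * f M / Real.log M) * Real.log x := by ring

lemma hGrowth (h : ℝ → ℝ) (hhpos : ∀ x : ℝ, 0 ≤ x → 0 < h x)
    (hhmono : Monotone h ∨ Antitone h)
    (hhslow : Tendsto (fun x : ℝ => h (x ^ 2) / h x) atTop (nhds 1)) :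
    ∃ c1 c2 : ℝ, 0 < c1 ∧ 0 < c2 ∧
      ∀ᶠ x in atTop, c1 / Real.log x ≤ h x ∧ h x ≤ c2 * Real.log x := by
  have hev : ∀ᶠ y : ℝ in atTop, (1:ℝ)/2 < h (y^2) / h y ∧ h (y^2)/h y < 2 :=
    (hhslow.eventually_const_lt (by norm_num)).and (hhslow.eventually_lt_const (by norm_num))
  obtain ⟨M₀, hM₀⟩ := eventually_atTop.mp hev
  set M : ℝ := max M₀ (Real.exp 1) with hMdef
  have hMe : Real.exp 1 ≤ M := le_max_right _ _
  have hM0 : (0:ℝ) < M := lt_of_lt_of_le (Real.exp_pos 1) hMe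
  have hMy : ∀ y, M ≤ y → (1:ℝ)/2 * h y ≤ h (y^2) ∧ h (y^2) ≤ 2 * h y := by
    intro y hy
    have hy0 : (0:ℝ) ≤ y := (le_trans hM0.le hy)
    have hhy : 0 < h y := hhpos y hy0
    obtain ⟨h1, h2⟩ := hM₀ y (le_trans (le_max_left _ _) hy)
    constructor
    · rw [div_lt_div_iff₀ (by norm_num) hhy] at h1
      nlinarith
    · rw [div_lt_iff₀ hhy] at h2
      linarith
  have hlogM : (1:ℝ) ≤ Real.log M := by
    have := Real.log_le_log (Real.exp_pos 1) hMe; rwa [Real.log_exp] at this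
  rcases hhmono with hm | ha
  · have hfM : 0 < h M := hhpos M hM0.le
    have hbd := chainBound h M hMe (fun a b _ hab => hm hab)
      (fun y hy => (hMy y hy).2) hfM
    refine ⟨h M, 2 * h M / Real.log M, hfM, by positivity, ?_⟩
    filter_upwards [eventually_ge_atTop M, eventually_ge_atTop (Real.exp 1)] with z hz hz1
    have hlogz : (1:ℝ) ≤ Real.log z := by
      have := Real.log_le_log (Real.exp_pos 1) hz1; rwa [Real.log_exp] at this
    constructor
    · have h1 : h M / Real.log z ≤ h M := by
        rw [div_le_iff₀ (by linarith : (0:ℝ) < Real.log z)]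
        exact le_mul_of_one_le_right hfM.le hlogz
      exact h1.trans (hm hz)
    · exact hbd z hz
  · have hpos' : ∀ z : ℝ, 0 < h z := by
      intro z
      calc (0:ℝ) < h (max z 0) := hhpos _ (le_max_right _ _)
      _ ≤ h z := ha (le_max_left _ _)
    have hbd := chainBound (fun z => (h z)⁻¹) M hMe
      (fun a b _ hab => by
        have := ha hab
        exact one_div_le_one_div_of_le (hpos' b) this |>.trans_eq (one_div _) |>.trans_eq' (one_div (h a)))
      (fun y hy => by
        have h1 := (hMy y hy).1
        have hy2 : 0 < h (y^2) := hpos' _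
        have hy' : 0 < h y := hpos' _
        have h2 : (h (y^2))⁻¹ ≤ (1/2 * h y)⁻¹ := by
          apply inv_anti₀ (by positivity) h1
        refine h2.trans (le_of_eq ?_)
        rw [mul_inv]
        norm_num)
      (by exact inv_pos.mpr (hpos' M))
    refine ⟨(2 * (h M)⁻¹ / Real.log M)⁻¹, h M,
      by have := hpos' M; positivity, hpos' M, ?_⟩
    filter_upwards [eventually_ge_atTop M, eventually_ge_atTop (Real.exp 1)] with z hz hz1
    have hlogz : (1:ℝ) ≤ Real.log z := by
      have := Real.log_le_log (Real.exp_pos 1) hz1; rwa [Real.log_exp] at this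
    have hbz := hbd z hz
    constructor
    · have hlogz0 : (0:ℝ) < Real.log z := by linarith
      have hC : (0:ℝ) < 2 * (h M)⁻¹ / Real.log M := by have := hpos' M; positivity
      have h1 : (1:ℝ) ≤ 2 * (h M)⁻¹ / Real.log M * Real.log z * h z := by
        have := mul_le_mul_of_nonneg_right hbz (hpos' z).le
        rwa [inv_mul_cancel₀ (hpos' z).ne'] at this
      rw [div_le_iff₀ hlogz0, inv_le_iff_one_le_mul₀ hC]
      nlinarith
    · calc h z ≤ h M := ha hz
      _ ≤ h M * Real.log z := le_mul_of_one_le_right (hpos' M).le hlogz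

lemma loghSmall (h : ℝ → ℝ) (hhpos : ∀ x : ℝ, 0 ≤ x → 0 < h x)
    (hhmono : Monotone h ∨ Antitone h)
    (hhslow : Tendsto (fun x : ℝ => h (x ^ 2) / h x) atTop (nhds 1)) :
    Tendsto (fun x : ℝ => Real.log (h x) / Real.log x) atTop (nhds 0) := by
  obtain ⟨c1, c2, hc1, hc2, hev⟩ := hGrowth h hhpos hhmono hhslow
  have hlim1 : Tendsto (fun x : ℝ => (Real.log c1 - Real.log (Real.log x)) / Real.log x)
      atTop (nhds 0) := by
    have h1 : Tendsto (fun x : ℝ => Real.log c1 / Real.log x) atTop (nhds 0) :=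
      tendsto_const_nhds.div_atTop Real.tendsto_log_atTop
    have := h1.sub tendsto_loglog_div_log
    rw [sub_zero] at this
    exact this.congr (fun x => (sub_div _ _ _).symm)
  have hlim2 : Tendsto (fun x : ℝ => (Real.log c2 + Real.log (Real.log x)) / Real.log x)
      atTop (nhds 0) := by
    have h1 : Tendsto (fun x : ℝ => Real.log c2 / Real.log x) atTop (nhds 0) :=
      tendsto_const_nhds.div_atTop Real.tendsto_log_atTop
    have := h1.add tendsto_loglog_div_log
    rw [add_zero] at this
    exact this.congr (fun x => (add_div _ _ _).symm)
  apply tendsto_of_tendsto_of_tendsto_of_le_of_le' hlim1 hlim2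
  · filter_upwards [hev, eventually_ge_atTop (Real.exp 1)] with z hz hz1
    have hlogz : (1:ℝ) ≤ Real.log z := by
      have := Real.log_le_log (Real.exp_pos 1) hz1; rwa [Real.log_exp] at this
    have hlogz0 : (0:ℝ) < Real.log z := lt_of_lt_of_le one_pos hlogz
    have hhz : 0 < h z := lt_of_lt_of_le (by positivity) hz.1
    rw [div_le_div_iff_of_pos_right hlogz0]
    have : Real.log (c1 / Real.log z) ≤ Real.log (h z) :=
      Real.log_le_log (by positivity) hz.1
    rwa [Real.log_div hc1.ne' hlogz0.ne'] at this
  · filter_upwards [hev, eventually_ge_atTop (Real.exp 1)] with z hz hz1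
    have hlogz : (1:ℝ) ≤ Real.log z := by
      have := Real.log_le_log (Real.exp_pos 1) hz1; rwa [Real.log_exp] at this
    have hlogz0 : (0:ℝ) < Real.log z := lt_of_lt_of_le one_pos hlogz
    have hhz : 0 < h z := lt_of_lt_of_le (by positivity) hz.1
    rw [div_le_div_iff_of_pos_right hlogz0]
    have : Real.log (h z) ≤ Real.log (c2 * Real.log z) :=
      Real.log_le_log hhz hz.2
    rwa [Real.log_mul hc2.ne' hlogz0.ne'] at this

lemma pow2Ratio (h : ℝ → ℝ) (hhpos : ∀ x : ℝ, 0 ≤ x → 0 < h x)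
    (hhslow : Tendsto (fun x : ℝ => h (x ^ 2) / h x) atTop (nhds 1)) :
    ∀ k : ℕ, Tendsto (fun x : ℝ => h (x ^ ((2:ℝ) ^ k)) / h x) atTop (nhds 1) := by
  intro k
  induction k with
  | zero =>
    apply tendsto_const_nhds.congr'
    filter_upwards [eventually_ge_atTop (1:ℝ)] with x hx
    rw [pow_zero, Real.rpow_one, div_self (ne_of_gt (hhpos x (by linarith)))]
  | succ k ih =>
    have hcomp : Tendsto (fun x : ℝ => h ((x ^ ((2:ℝ) ^ k)) ^ 2) / h (x ^ ((2:ℝ) ^ k)))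
        atTop (nhds 1) := hhslow.comp (tendsto_rpow_atTop (by positivity))
    have hmul := hcomp.mul ih
    rw [one_mul] at hmul
    apply hmul.congr'
    filter_upwards [eventually_ge_atTop (1:ℝ)] with x hx
    have hx0 : (0:ℝ) < x := lt_of_lt_of_le one_pos hx
    have hne : h (x ^ ((2:ℝ) ^ k)) ≠ 0 :=
      ne_of_gt (hhpos _ (Real.rpow_nonneg hx0.le _))
    have hsq : (x ^ ((2:ℝ) ^ k)) ^ 2 = x ^ ((2:ℝ) ^ (k + 1)) := by
      rw [← Real.rpow_natCast (x ^ ((2:ℝ) ^ k)) 2, ← Real.rpow_mul hx0.le]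
      norm_num [pow_succ]
    rw [hsq, div_mul_div_cancel₀]
    exact hne

lemma invPow2Ratio (h : ℝ → ℝ) (hhpos : ∀ x : ℝ, 0 ≤ x → 0 < h x)
    (hhslow : Tendsto (fun x : ℝ => h (x ^ 2) / h x) atTop (nhds 1)) :
    ∀ k : ℕ, Tendsto (fun x : ℝ => h (x ^ (((2:ℝ) ^ k)⁻¹)) / h x) atTop (nhds 1) := by
  intro k
  have h1 := (pow2Ratio h hhpos hhslow k).comp
    (tendsto_rpow_atTop (by positivity : (0:ℝ) < ((2:ℝ) ^ k)⁻¹))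
  have h2 : Tendsto (fun x : ℝ => h x / h (x ^ (((2:ℝ) ^ k)⁻¹))) atTop (nhds 1) := by
    apply h1.congr'
    filter_upwards [eventually_ge_atTop (1:ℝ)] with x hx
    have hx0 : (0:ℝ) < x := lt_of_lt_of_le one_pos hx
    have : (x ^ (((2:ℝ) ^ k)⁻¹)) ^ ((2:ℝ) ^ k) = x := by
      rw [← Real.rpow_mul hx0.le, inv_mul_cancel₀ (by positivity), Real.rpow_one]
    simp only [Function.comp]
    rw [this]
  have h3 := h2.inv₀ one_ne_zero
  rw [inv_one] at h3
  apply h3.congr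
  intro x
  rw [inv_div]

lemma powRatio (h : ℝ → ℝ) (hhpos : ∀ x : ℝ, 0 ≤ x → 0 < h x)
    (hhmono : Monotone h ∨ Antitone h)
    (hhslow : Tendsto (fun x : ℝ => h (x ^ 2) / h x) atTop (nhds 1))
    (c : ℝ) (hc : 0 < c) :
    Tendsto (fun x : ℝ => h (x ^ c) / h x) atTop (nhds 1) := by
  obtain ⟨k, hk⟩ := pow_unbounded_of_one_lt (max c c⁻¹) (one_lt_two (α := ℝ))
  have hck : c ≤ (2:ℝ) ^ k := le_of_lt (lt_of_le_of_lt (le_max_left _ _) hk)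
  have hc'k : ((2:ℝ) ^ k)⁻¹ ≤ c := by
    have h1 : c⁻¹ ≤ (2:ℝ) ^ k := le_of_lt (lt_of_le_of_lt (le_max_right _ _) hk)
    rw [inv_le_comm₀ (by positivity) hc]
    exact h1
  have hbound : ∀ᶠ x : ℝ in atTop,
      x ^ (((2:ℝ) ^ k)⁻¹) ≤ x ^ c ∧ x ^ c ≤ x ^ ((2:ℝ) ^ k) := by
    filter_upwards [eventually_ge_atTop (1:ℝ)] with x hx
    exact ⟨Real.rpow_le_rpow_of_exponent_le hx hc'k,
      Real.rpow_le_rpow_of_exponent_le hx hck⟩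
  rcases hhmono with hm | ha
  · apply tendsto_of_tendsto_of_tendsto_of_le_of_le'
      (invPow2Ratio h hhpos hhslow k) (pow2Ratio h hhpos hhslow k)
    · filter_upwards [hbound, eventually_ge_atTop (1:ℝ)] with x hb hx
      exact (div_le_div_iff_of_pos_right (hhpos x (by linarith))).mpr (hm hb.1)
    · filter_upwards [hbound, eventually_ge_atTop (1:ℝ)] with x hb hx
      exact (div_le_div_iff_of_pos_right (hhpos x (by linarith))).mpr (hm hb.2)
  · apply tendsto_of_tendsto_of_tendsto_of_le_of_le'
      (pow2Ratio h hhpos hhslow k) (invPow2Ratio h hhpos hhslow k)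
    · filter_upwards [hbound, eventually_ge_atTop (1:ℝ)] with x hb hx
      exact (div_le_div_iff_of_pos_right (hhpos x (by linarith))).mpr (ha hb.2)
    · filter_upwards [hbound, eventually_ge_atTop (1:ℝ)] with x hb hx
      exact (div_le_div_iff_of_pos_right (hhpos x (by linarith))).mpr (ha hb.1)

lemma geomLimit (G : ℕ → ℝ) (L : ℝ) (hL : 0 < L) (hG : Tendsto G atTop (nhds L)) :
    Tendsto (fun n : ℕ => (1 - G n / n) ^ n) atTop (nhds (Real.exp (-L))) := by
  have hGn : Tendsto (fun n : ℕ => G n / n) atTop (nhds 0) :=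
    hG.div_atTop tendsto_natCast_atTop_atTop
  have hslope : Tendsto (fun u : ℝ => Real.log (1 + u) / u) (nhdsWithin 0 {0}ᶜ) (nhds 1) := by
    have hd : HasDerivAt (fun u : ℝ => Real.log (1 + u)) 1 0 := by
      have h1 : HasDerivAt (fun u : ℝ => 1 + u) 1 0 := (hasDerivAt_id 0).const_add 1
      have h2 := h1.log (by norm_num)
      simpa using h2
    have h3 := hasDerivAt_iff_tendsto_slope.mp hd
    apply h3.congr
    intro u
    simp [slope_def_field, Real.log_one]
  have hpos : ∀ᶠ n : ℕ in atTop, 0 < G n ∧ G n / (n:ℝ) < 1/2 ∧ (0:ℝ) < n := by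
    filter_upwards [hG.eventually_const_lt (by linarith : (0:ℝ) < L),
      hGn.eventually_lt_const (by norm_num : (0:ℝ) < 1/2),
      eventually_ge_atTop 1] with n h1 h2 h3
    exact ⟨h1, h2, by exact_mod_cast Nat.lt_of_lt_of_le Nat.zero_lt_one h3⟩
  have hu : Tendsto (fun n : ℕ => -(G n / n)) atTop (nhdsWithin 0 {0}ᶜ) := by
    apply tendsto_nhdsWithin_of_tendsto_nhds_of_eventually_within
    · simpa using hGn.neg
    · filter_upwards [hpos] with n hn
      have : G n / (n:ℝ) ≠ 0 := ne_of_gt (div_pos hn.1 hn.2.2)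
      simp [this]
  have hmain : Tendsto (fun n : ℕ => (n:ℝ) * Real.log (1 - G n / n)) atTop (nhds (-L)) := by
    have h1 := (hG.neg).mul (hslope.comp hu)
    rw [mul_one] at h1
    apply h1.congr'
    filter_upwards [hpos] with n hn
    have hn0 : ((n:ℝ)) ≠ 0 := ne_of_gt hn.2.2
    have hGn0 : G n ≠ 0 := ne_of_gt hn.1
    simp only [Function.comp]
    rw [← sub_eq_add_neg]
    field_simp
  have hfinal := (Real.continuous_exp.tendsto _).comp hmain
  apply hfinal.congr'
  filter_upwards [hpos] with n hn
  have hp : (0:ℝ) < 1 - G n / n := by linarith [hn.2.1]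
  simp only [Function.comp]
  rw [Real.exp_nat_mul, Real.exp_log hp]

lemma Log_exp' {a : ℝ} (ha : 1 ≤ a) : Log (Real.exp a) = a := by
  unfold Log
  rw [max_eq_right (Real.exp_le_exp.mpr ha), Real.log_exp]

lemma Log_le_iff {y a : ℝ} (ha : 1 ≤ a) : Log y ≤ a ↔ y ≤ Real.exp a := by
  unfold Log
  rw [Real.log_le_iff_le_exp (lt_of_lt_of_le (Real.exp_pos 1) (le_max_left _ _)),
    max_le_iff]
  constructor
  · exact fun h => h.2
  · exact fun h => ⟨by rw [Real.exp_le_exp]; exact ha, h⟩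

lemma claimE (ρ τ x N A B : ℝ) (hN : 1 < N) (hρ : 0 < ρ) (hA : 1 ≤ A) (hB : 0 < B)
    (hdef : ρ * A = Real.log N + τ * Real.log (Real.log N) + Real.log B - τ * Real.log ρ + x)
    (C : ℝ) :
    N * (Log (Real.exp A) ^ τ * C / (Real.exp A) ^ ρ) =
      (C / B) * Real.exp (τ * Real.log (ρ * A / Real.log N)) * Real.exp (-x) := by
  have hL : (0:ℝ) < Real.log N := Real.log_pos hN
  have hA0 : (0:ℝ) < A := lt_of_lt_of_le one_pos hA
  rw [Log_exp' hA]
  rw [Real.rpow_def_of_pos hA0 τ]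
  rw [Real.rpow_def_of_pos (Real.exp_pos A) ρ, Real.log_exp]
  rw [Real.log_div (by positivity) hL.ne', Real.log_mul hρ.ne' hA0.ne']
  have hAρ : A * ρ = Real.log N + τ * Real.log (Real.log N) + Real.log B - τ * Real.log ρ + x := by
    rw [mul_comm]; exact hdef
  have key : Real.exp (Real.log A * τ) / Real.exp (A * ρ) * N =
      Real.exp (τ * (Real.log ρ + Real.log A - Real.log (Real.log N))) * Real.exp (-x) / B := by
    have e1 : Real.exp (Real.log A * τ) / Real.exp (A * ρ) * N =
        Real.exp (Real.log A * τ - A * ρ + Real.log N) := by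
      rw [Real.exp_add, Real.exp_sub, Real.exp_log (by linarith : (0:ℝ) < N)]
    have e2 : Real.exp (τ * (Real.log ρ + Real.log A - Real.log (Real.log N))) * Real.exp (-x) / B =
        Real.exp (τ * (Real.log ρ + Real.log A - Real.log (Real.log N)) + -x - Real.log B) := by
      rw [Real.exp_sub, Real.exp_add, Real.exp_log hB]
    rw [e1, e2]
    congr 1
    rw [hAρ]
    ring
  calc N * (Real.exp (Real.log A * τ) * C / Real.exp (A * ρ))
      = C * (Real.exp (Real.log A * τ) / Real.exp (A * ρ) * N) := by ring
    _ = C * (Real.exp (τ * (Real.log ρ + Real.log A - Real.log (Real.log N))) * Real.exp (-x) / B) := by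
        rw [key]
    _ = C / B * Real.exp (τ * (Real.log ρ + Real.log A - Real.log (Real.log N))) * Real.exp (-x) := by
        ring

lemma probMax {Ω : Type*} [MeasurableSpace Ω] (μ : Measure Ω) [IsProbabilityMeasure μ]
    (X : ℕ → Ω → ℝ) (hmeas : ∀ n, Measurable (X n))
    (hindep : iIndepFun X μ)
    (hident : ∀ n, IdentDistrib (X n) (X 0) μ μ)
    (n : ℕ) (hn : n ≠ 0) (t : ℝ) :
    (μ {ω | pmax X n ω ≤ t}).toReal = (1 - (μ {ω | X 0 ω > t}).toReal) ^ n := by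
  have hset : {ω | pmax X n ω ≤ t} = ⋂ i ∈ Finset.range n, X i ⁻¹' Set.Iic t := by
    ext ω
    simp only [Set.mem_setOf_eq, Set.mem_iInter, Set.mem_preimage, Set.mem_Iic, pmax,
      dif_neg hn, Finset.sup'_le_iff]
  have hprod := hindep.measure_inter_preimage_eq_mul (S := Finset.range n)
    (sets := fun _ => Set.Iic t) (fun i _ => measurableSet_Iic)
  rw [hset, hprod]
  have hcongr : ∀ i ∈ Finset.range n, μ (X i ⁻¹' Set.Iic t) = μ (X 0 ⁻¹' Set.Iic t) :=
    fun i _ => (hident i).measure_mem_eq measurableSet_Iic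
  rw [Finset.prod_congr rfl hcongr, Finset.prod_const, Finset.card_range, ENNReal.toReal_pow]
  congr 1
  have hcompl : X 0 ⁻¹' Set.Iic t = {ω | X 0 ω > t}ᶜ := by
    ext ω; simp [not_lt]
  have hms : MeasurableSet {ω | X 0 ω > t} := (hmeas 0) measurableSet_Ioi
  rw [hcompl, prob_compl_eq_one_sub hms,
    ENNReal.toReal_sub_of_le prob_le_one ENNReal.one_ne_top, ENNReal.toReal_one]

end Helpers

theorem stmt13 {Ω : Type*} [MeasurableSpace Ω] (μ : Measure Ω) [IsProbabilityMeasure μ]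
    (X : ℕ → Ω → ℝ) (hmeas : ∀ n, Measurable (X n))
    (hindep : iIndepFun X μ)
    (hident : ∀ n, IdentDistrib (X n) (X 0) μ μ)
    (ρ τ : ℝ) (hρ : 0 < ρ) (h : ℝ → ℝ) (hhpos : ∀ x : ℝ, 0 ≤ x → 0 < h x)
    (hhmono : Monotone h ∨ Antitone h)
    (hhslow : Tendsto (fun x : ℝ => h (x ^ 2) / h x) atTop (nhds 1))
    (htail : Tendsto (fun x : ℝ =>
        (μ {ω | X 0 ω > x}).toReal / ((Log x ^ τ * h x) / x ^ ρ)) atTop (nhds 1)) :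
    ∀ x : ℝ,
      Tendsto (fun n : ℕ =>
          (μ {ω | Log (pmax X n ω) ≤
            (Real.log n + τ * Real.log (Real.log n) + Real.log (h n) - τ * Real.log ρ + x) / ρ}).toReal)
        atTop (nhds (Real.exp (-Real.exp (-x)))) := by
  intro x
  set a : ℕ → ℝ := fun n =>
    (Real.log n + τ * Real.log (Real.log n) + Real.log (h n) - τ * Real.log ρ + x) / ρ with hadef
  have hcast : Tendsto (fun n : ℕ => (n:ℝ)) atTop atTop := tendsto_natCast_atTop_atTop
  have hlogn : Tendsto (fun n : ℕ => Real.log n) atTop atTop := Real.tendsto_log_atTop.comp hcast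
  have hll : Tendsto (fun n : ℕ => Real.log (Real.log n) / Real.log n) atTop (nhds 0) :=
    tendsto_loglog_div_log.comp hcast
  have hlh : Tendsto (fun n : ℕ => Real.log (h n) / Real.log n) atTop (nhds 0) :=
    (loghSmall h hhpos hhmono hhslow).comp hcast
  have hcd : Tendsto (fun n : ℕ => (x - τ * Real.log ρ) / Real.log n) atTop (nhds 0) :=
    tendsto_const_nhds.div_atTop hlogn
  have hq : Tendsto (fun n : ℕ => ρ * a n / Real.log n) atTop (nhds 1) := by
    have hsum : Tendsto (fun n : ℕ => 1 + (τ * (Real.log (Real.log n) / Real.log n) +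
        (Real.log (h n) / Real.log n + (x - τ * Real.log ρ) / Real.log n)))
        atTop (nhds (1 + (τ * 0 + (0 + 0)))) :=
      tendsto_const_nhds.add ((hll.const_mul τ).add (hlh.add hcd))
    norm_num at hsum
    apply hsum.congr'
    filter_upwards [eventually_ge_atTop 2] with n hn
    have hn1 : (1:ℝ) < n := by exact_mod_cast Nat.lt_of_lt_of_le Nat.one_lt_two hn
    have hln : (0:ℝ) < Real.log n := Real.log_pos hn1
    simp only [hadef]
    field_simp
    ring
  have haTop : Tendsto a atTop atTop := by
    have h1 := (Filter.Tendsto.pos_mul_atTop one_pos hq hlogn).atTop_div_const hρ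
    apply h1.congr'
    filter_upwards [eventually_ge_atTop 2] with n hn
    have hn1 : (1:ℝ) < n := by exact_mod_cast Nat.lt_of_lt_of_le Nat.one_lt_two hn
    have hln : (0:ℝ) < Real.log n := Real.log_pos hn1
    field_simp
  have htTop : Tendsto (fun n : ℕ => Real.exp (a n)) atTop atTop :=
    Real.tendsto_exp_atTop.comp haTop
  have ha1 : ∀ᶠ n : ℕ in atTop, 1 ≤ a n := haTop.eventually_ge_atTop 1
  have hqb : ∀ᶠ n : ℕ in atTop, 1/2 ≤ ρ * a n / Real.log n ∧ ρ * a n / Real.log n ≤ 2 :=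
    ((hq.eventually_const_lt (by norm_num)).and (hq.eventually_lt_const (by norm_num))).mono
      fun n hn => ⟨hn.1.le, hn.2.le⟩
  have hhratio : Tendsto (fun n : ℕ => h (Real.exp (a n)) / h n) atTop (nhds 1) := by
    have hlow := (powRatio h hhpos hhmono hhslow ((2*ρ)⁻¹) (by positivity)).comp hcast
    have hhigh := (powRatio h hhpos hhmono hhslow (2/ρ) (by positivity)).comp hcast
    have hsand : ∀ᶠ n : ℕ in atTop,
        (n:ℝ) ^ ((2*ρ)⁻¹) ≤ Real.exp (a n) ∧ Real.exp (a n) ≤ (n:ℝ) ^ (2/ρ) := by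
      filter_upwards [hqb, eventually_ge_atTop 2] with n hb hn
      have hn1 : (1:ℝ) < n := by exact_mod_cast Nat.lt_of_lt_of_le Nat.one_lt_two hn
      have hln : (0:ℝ) < Real.log n := Real.log_pos hn1
      have hb1 := hb.1
      have hb2 := hb.2
      rw [le_div_iff₀ hln] at hb1
      rw [div_le_iff₀ hln] at hb2
      have hA1 : Real.log n * (2*ρ)⁻¹ ≤ a n := by
        rw [← div_eq_mul_inv, div_le_iff₀ (by positivity)]
        nlinarith
      have hA2 : a n ≤ Real.log n * (2/ρ) := by
        have h2 : Real.log n * (2/ρ) = 2 * Real.log n / ρ := by ring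
        rw [h2, le_div_iff₀ hρ]
        nlinarith
      constructor
      · rw [Real.rpow_def_of_pos (by linarith : (0:ℝ) < n)]
        exact Real.exp_le_exp.mpr hA1
      · rw [Real.rpow_def_of_pos (by linarith : (0:ℝ) < n)]
        exact Real.exp_le_exp.mpr hA2
    rcases hhmono with hm | hanti
    · apply tendsto_of_tendsto_of_tendsto_of_le_of_le' hlow hhigh
      · filter_upwards [hsand] with n hs
        exact (div_le_div_iff_of_pos_right (hhpos _ (Nat.cast_nonneg n))).mpr (hm hs.1)
      · filter_upwards [hsand] with n hs
        exact (div_le_div_iff_of_pos_right (hhpos _ (Nat.cast_nonneg n))).mpr (hm hs.2)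
    · apply tendsto_of_tendsto_of_tendsto_of_le_of_le' hhigh hlow
      · filter_upwards [hsand] with n hs
        exact (div_le_div_iff_of_pos_right (hhpos _ (Nat.cast_nonneg n))).mpr (hanti hs.2)
      · filter_upwards [hsand] with n hs
        exact (div_le_div_iff_of_pos_right (hhpos _ (Nat.cast_nonneg n))).mpr (hanti hs.1)
  have hexp1 : Tendsto (fun n : ℕ => Real.exp (τ * Real.log (ρ * a n / Real.log n)))
      atTop (nhds 1) := by
    have hlog1 : Tendsto (fun n : ℕ => Real.log (ρ * a n / Real.log n)) atTop (nhds 0) := by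
      have hc := (Real.continuousAt_log one_ne_zero).tendsto.comp hq
      simpa [Function.comp_def] using hc
    have h0 := hlog1.const_mul τ
    rw [mul_zero] at h0
    have := (Real.continuous_exp.tendsto 0).comp h0
    simpa [Function.comp_def] using this
  have hR : Tendsto (fun n : ℕ => (μ {ω | X 0 ω > Real.exp (a n)}).toReal /
      ((Log (Real.exp (a n)) ^ τ * h (Real.exp (a n))) / (Real.exp (a n)) ^ ρ))
      atTop (nhds 1) := htail.comp htTop
  have hG : Tendsto (fun n : ℕ => (n:ℝ) * (μ {ω | X 0 ω > Real.exp (a n)}).toReal)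
      atTop (nhds (Real.exp (-x))) := by
    have hmul := (hR.mul (hhratio.mul hexp1)).mul_const (Real.exp (-x))
    norm_num at hmul
    apply hmul.congr'
    filter_upwards [ha1, eventually_ge_atTop 2] with n hA hn
    have hn1 : (1:ℝ) < n := by exact_mod_cast Nat.lt_of_lt_of_le Nat.one_lt_two hn
    have hhn : 0 < h n := hhpos _ (by positivity)
    have hdefn : ρ * a n = Real.log n + τ * Real.log (Real.log n) + Real.log (h n) -
        τ * Real.log ρ + x := by
      simp only [hadef]
      rw [mul_comm, div_mul_cancel₀ _ hρ.ne']
    have hE := claimE ρ τ x (n:ℝ) (a n) (h n) hn1 hρ hA hhn hdefn (h (Real.exp (a n)))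
    have hψpos : 0 < (Log (Real.exp (a n)) ^ τ * h (Real.exp (a n))) / (Real.exp (a n)) ^ ρ := by
      apply div_pos
      · apply mul_pos
        · apply Real.rpow_pos_of_pos
          rw [Log_exp' hA]; linarith
        · exact hhpos _ (Real.exp_pos _).le
      · exact Real.rpow_pos_of_pos (Real.exp_pos _) ρ
    set Fb := (μ {ω | X 0 ω > Real.exp (a n)}).toReal with hFb
    set ψ := (Log (Real.exp (a n)) ^ τ * h (Real.exp (a n))) / (Real.exp (a n)) ^ ρ with hψ
    calc Fb / ψ * (h (Real.exp (a n)) / h n *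
          Real.exp (τ * Real.log (ρ * a n / Real.log n))) * Real.exp (-x)
        = (h (Real.exp (a n)) / h n *
            Real.exp (τ * Real.log (ρ * a n / Real.log n)) * Real.exp (-x)) * (Fb / ψ) := by
          ring
      _ = ((n:ℝ) * ψ) * (Fb / ψ) := by rw [← hE]
      _ = (n:ℝ) * Fb * (ψ / ψ) := by ring
      _ = (n:ℝ) * Fb := by rw [div_self hψpos.ne', mul_one]
  have hgeom := geomLimit _ (Real.exp (-x)) (Real.exp_pos _) hG
  apply hgeom.congr'
  filter_upwards [ha1, eventually_ge_atTop 1] with n hA hn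
  have hn0 : n ≠ 0 := by omega
  have hnR : ((n:ℝ)) ≠ 0 := Nat.cast_ne_zero.mpr hn0
  have hset : {ω | Log (pmax X n ω) ≤ a n} = {ω | pmax X n ω ≤ Real.exp (a n)} :=
    Set.ext fun ω => Log_le_iff hA
  have h1 : (μ {ω | Log (pmax X n ω) ≤ a n}).toReal =
      (1 - (μ {ω | X 0 ω > Real.exp (a n)}).toReal) ^ n := by
    rw [hset]; exact probMax μ X hmeas hindep hident n hn0 _
  show (1 - ((n:ℝ) * (μ {ω | X 0 ω > Real.exp (a n)}).toReal) / n) ^ n =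
    (μ {ω | Log (pmax X n ω) ≤ a n}).toReal
  rw [h1, mul_div_cancel_left₀ _ hnR]
end

section
/- Let {X_n} be i.i.d. random variables, θ = sup{r ≥ 0 : E|X|^r < ∞}, and θ̂_n = (log n)/(log max_{1≤k≤n}|X_k|). Then liminf_{n→∞} θ̂_n = θ almost surely. -/
open MeasureTheory ProbabilityTheory Filter
open scoped ENNReal

lemma one_le_Log (x : ℝ) : 1 ≤ Log x := by
  rw [Log]
  nth_rewrite 1 [← Real.log_exp 1]
  exact Real.log_le_log (Real.exp_pos 1) (le_max_left _ _)

lemma Log_pos (x : ℝ) : 0 < Log x := lt_of_lt_of_le one_pos (one_le_Log x)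

lemma Log_mono {x y : ℝ} (h : x ≤ y) : Log x ≤ Log y :=
  Real.log_le_log ((Real.exp_pos 1).trans_le (le_max_left _ _)) (max_le_max le_rfl h)

lemma log_le_Log {x : ℝ} (hx : 0 ≤ x) : Real.log x ≤ Log x := by
  rcases hx.eq_or_lt with rfl | h
  · rw [Real.log_zero]; exact (Log_pos 0).le
  · exact Real.log_le_log h (le_max_right _ _)

lemma Log_max (a b : ℝ) : Log (max a b) = max (Log a) (Log b) := by
  rcases le_total a b with h | h
  · rw [max_eq_right h, max_eq_right (Log_mono h)]
  · rw [max_eq_left h, max_eq_left (Log_mono h)]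

lemma Log_le_max_one_log (x : ℝ) : Log x ≤ max 1 (Real.log x) := by
  rcases le_total x (Real.exp 1) with h | h
  · rw [Log, max_eq_left h, Real.log_exp]; exact le_max_left _ _
  · rw [Log, max_eq_right h]; exact le_max_right _ _

lemma tendsto_Log_nat : Tendsto (fun n : ℕ => Log n) atTop atTop := by
  have h1 : Tendsto Log atTop atTop := by
    refine tendsto_atTop_mono' _ ?_ Real.tendsto_log_atTop
    filter_upwards [eventually_ge_atTop (0:ℝ)] with x hx using log_le_Log hx
  exact h1.comp tendsto_natCast_atTop_atTop

lemma le_pmax {Ω : Type*} {X : ℕ → Ω → ℝ} {k n : ℕ} (h : k < n) (ω : Ω) :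
    X k ω ≤ pmax X n ω := by
  rw [pmax, dif_neg (Nat.zero_lt_of_lt h).ne']
  exact Finset.le_sup' (fun k => X k ω) (Finset.mem_range.mpr h)

lemma pmax_le {Ω : Type*} {X : ℕ → Ω → ℝ} {n : ℕ} (hn : n ≠ 0) {ω : Ω} {c : ℝ}
    (h : ∀ k < n, X k ω ≤ c) : pmax X n ω ≤ c := by
  rw [pmax, dif_neg hn]
  exact Finset.sup'_le _ _ fun k hk => h k (Finset.mem_range.mp hk)

lemma tsum_indicator_eq {Ω : Type*} (c : ℝ) (s : ℕ → Set Ω) (ω : Ω)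
    (h : ∀ n, ω ∈ s n ↔ (n : ℝ) < c) :
    ∑' n : ℕ, (s n).indicator (fun _ => (1 : ℝ≥0∞)) ω = (⌈c⌉₊ : ℝ≥0∞) := by
  rw [tsum_eq_sum (s := Finset.range ⌈c⌉₊)
    (fun n hn => Set.indicator_of_notMem
      (fun hmem => hn (Finset.mem_range.mpr (Nat.lt_ceil.mpr ((h n).mp hmem)))) _)]
  rw [Finset.sum_congr rfl
    (fun n hn => Set.indicator_of_mem ((h n).mpr (Nat.lt_ceil.mp (Finset.mem_range.mp hn))) _)]
  simp

lemma lintegral_ofReal_le_tsum {Ω : Type*} [MeasurableSpace Ω] (μ : Measure Ω)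
    (g : Ω → ℝ) (hg : Measurable g) :
    ∫⁻ ω, ENNReal.ofReal (g ω) ∂μ ≤ ∑' n : ℕ, μ {ω | (n : ℝ) < g ω} := by
  have hs : ∀ n : ℕ, MeasurableSet {ω | (n : ℝ) < g ω} :=
    fun n => measurableSet_lt measurable_const hg
  calc ∫⁻ ω, ENNReal.ofReal (g ω) ∂μ
      ≤ ∫⁻ ω, ∑' n : ℕ, ({ω' | (n : ℝ) < g ω'}).indicator (fun _ => (1 : ℝ≥0∞)) ω ∂μ := by
        refine lintegral_mono fun ω => ?_
        rw [tsum_indicator_eq (g ω) _ ω (fun n => Iff.rfl)]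
        rw [← ENNReal.ofReal_natCast]
        exact ENNReal.ofReal_le_ofReal (Nat.le_ceil _)
    _ = ∑' n : ℕ, ∫⁻ ω, ({ω' | (n : ℝ) < g ω'}).indicator (fun _ => (1 : ℝ≥0∞)) ω ∂μ :=
        lintegral_tsum fun n => (measurable_one.indicator (hs n)).aemeasurable
    _ = ∑' n : ℕ, μ {ω | (n : ℝ) < g ω} := by
        refine tsum_congr fun n => ?_
        exact lintegral_indicator_one (hs n)

lemma tsum_le_lintegral_ofReal {Ω : Type*} [MeasurableSpace Ω] (μ : Measure Ω)
    (g : Ω → ℝ) (hg : Measurable g) :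
    ∑' n : ℕ, μ {ω | (n : ℝ) + 1 < g ω} ≤ ∫⁻ ω, ENNReal.ofReal (g ω) ∂μ := by
  have hs : ∀ n : ℕ, MeasurableSet {ω | (n : ℝ) + 1 < g ω} :=
    fun n => measurableSet_lt (measurable_const.add measurable_const) hg
  calc ∑' n : ℕ, μ {ω | (n : ℝ) + 1 < g ω}
      = ∑' n : ℕ, ∫⁻ ω, ({ω' | (n : ℝ) + 1 < g ω'}).indicator (fun _ => (1 : ℝ≥0∞)) ω ∂μ := by
        refine tsum_congr fun n => (lintegral_indicator_one (hs n)).symm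
    _ = ∫⁻ ω, ∑' n : ℕ, ({ω' | (n : ℝ) + 1 < g ω'}).indicator (fun _ => (1 : ℝ≥0∞)) ω ∂μ :=
        (lintegral_tsum fun n => (measurable_one.indicator (hs n)).aemeasurable).symm
    _ ≤ ∫⁻ ω, ENNReal.ofReal (g ω) ∂μ := by
        refine lintegral_mono fun ω => ?_
        rw [tsum_indicator_eq (g ω - 1) _ ω (fun n => by simp [lt_sub_iff_add_lt])]
        rcases le_or_gt (g ω - 1) 0 with h | h
        · rw [Nat.ceil_eq_zero.mpr h]; simp
        · rw [← ENNReal.ofReal_natCast]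
          refine ENNReal.ofReal_le_ofReal ?_
          have := Nat.ceil_lt_add_one h.le
          linarith

lemma dirA {Ω : Type*} (X : ℕ → Ω → ℝ) (ω : Ω) {r : ℝ} (hr : 0 < r) {N : ℕ} (hN : N ≠ 0)
    (hbd : ∀ k, N ≤ k → |X k ω| ^ r ≤ (k : ℝ) + 1) :
    ∀ᶠ n : ℕ in atTop, r ≤ Log n / Log (pmax (fun k ω' => |X k ω'|) n ω) := by
  set C := pmax (fun k ω' => |X k ω'|) N ω with hC
  have htend : Tendsto (fun n : ℕ => (1 / r) * Log n) atTop atTop :=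
    tendsto_Log_nat.const_mul_atTop (by positivity)
  filter_upwards [eventually_ge_atTop N, htend.eventually_ge_atTop (max (Log C) 1)]
    with n hnN hnLog
  have hn0 : n ≠ 0 := fun h => hN (Nat.le_zero.mp (h ▸ hnN))
  have hnpos : (0:ℝ) < (n:ℝ) := by
    exact_mod_cast Nat.pos_of_ne_zero hn0
  have hM : pmax (fun k ω' => |X k ω'|) n ω ≤ max C ((n:ℝ) ^ (1/r)) := by
    refine pmax_le hn0 fun k hk => ?_
    rcases lt_or_ge k N with h | h
    · exact le_trans (le_pmax (X := fun k ω' => |X k ω'|) h ω) (le_max_left _ _)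
    · have hkn : (k : ℝ) + 1 ≤ (n : ℝ) := by exact_mod_cast Nat.succ_le_of_lt hk
      have h1 : |X k ω| ^ r ≤ (n : ℝ) := (hbd k h).trans hkn
      have h2 : |X k ω| = (|X k ω| ^ r) ^ (1/r) := by
        rw [← Real.rpow_mul (abs_nonneg _), mul_one_div_cancel hr.ne', Real.rpow_one]
      calc |X k ω| = (|X k ω| ^ r) ^ (1/r) := h2
        _ ≤ (n:ℝ) ^ (1/r) :=
            Real.rpow_le_rpow (Real.rpow_nonneg (abs_nonneg _) _) h1 (by positivity)
        _ ≤ max C ((n:ℝ) ^ (1/r)) := le_max_right _ _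
  have hLM : Log (pmax (fun k ω' => |X k ω'|) n ω) ≤ (1/r) * Log n := by
    refine (Log_mono hM).trans ?_
    rw [Log_max]
    refine max_le (le_trans (le_max_left (Log C) 1) hnLog) ?_
    refine (Log_le_max_one_log _).trans ?_
    rw [Real.log_rpow hnpos]
    refine max_le (le_trans (le_max_right (Log C) 1) hnLog) ?_
    exact mul_le_mul_of_nonneg_left (log_le_Log hnpos.le) (by positivity)
  rw [le_div_iff₀ (Log_pos _)]
  calc r * Log (pmax (fun k ω' => |X k ω'|) n ω) ≤ r * ((1/r) * Log n) :=
        mul_le_mul_of_nonneg_left hLM hr.le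
    _ = Log n := by field_simp

lemma dirB {Ω : Type*} (X : ℕ → Ω → ℝ) (ω : Ω) {r q : ℝ} (hr : 0 < r) (hrq : r < q)
    (hfreq : ∃ᶠ n : ℕ in atTop, (n : ℝ) < |X n ω| ^ r) :
    ∃ᶠ m : ℕ in atTop, Log m / Log (pmax (fun k ω' => |X k ω'|) m ω) ≤ q := by
  have hev : ∀ᶠ n : ℕ in atTop,
      (2:ℝ) ≤ (n:ℝ) ∧ Real.log 2 ≤ (q/r - 1) * Real.log n := by
    refine ((tendsto_natCast_atTop_atTop (R := ℝ)).eventually_ge_atTop 2).and ?_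
    have h1 : Tendsto (fun n : ℕ => (q/r - 1) * Real.log n) atTop atTop := by
      refine Tendsto.const_mul_atTop ?_ (Real.tendsto_log_atTop.comp tendsto_natCast_atTop_atTop)
      have : 1 < q / r := (one_lt_div hr).mpr hrq
      linarith
    exact h1.eventually_ge_atTop _
  rw [frequently_atTop] at hfreq ⊢
  intro b
  obtain ⟨n₀, hn₀⟩ := eventually_atTop.mp hev
  obtain ⟨n, hn, hX⟩ := hfreq (max b n₀)
  obtain ⟨h2n, hlogn⟩ := hn₀ n (le_trans (le_max_right _ _) hn)
  refine ⟨n + 1, le_trans (le_trans (le_max_left _ _) hn) (Nat.le_succ n), ?_⟩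
  have hnpos : (0:ℝ) < (n:ℝ) := by linarith
  have hlogn_pos : 0 < Real.log n := Real.log_pos (by linarith)
  have hM : (n:ℝ) ^ (1/r) ≤ pmax (fun k ω' => |X k ω'|) (n+1) ω := by
    refine le_trans ?_ (le_pmax (X := fun k ω' => |X k ω'|) (Nat.lt_succ_self n) ω)
    calc (n:ℝ) ^ (1/r) ≤ (|X n ω| ^ r) ^ (1/r) :=
          Real.rpow_le_rpow hnpos.le hX.le (by positivity)
      _ = |X n ω| := by
          rw [← Real.rpow_mul (abs_nonneg _), mul_one_div_cancel hr.ne', Real.rpow_one]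
  have hLB : (1/r) * Real.log n ≤ Log (pmax (fun k ω' => |X k ω'|) (n+1) ω) := by
    calc (1/r) * Real.log n = Real.log ((n:ℝ) ^ (1/r)) := (Real.log_rpow hnpos _).symm
      _ ≤ Log ((n:ℝ) ^ (1/r)) := log_le_Log (by positivity)
      _ ≤ _ := Log_mono hM
  have hnum : Log ((n:ℝ) + 1) ≤ q * ((1/r) * Real.log n) := by
    have h3 : Real.exp 1 ≤ (n:ℝ) + 1 := by
      have := Real.exp_one_lt_d9
      linarith
    rw [Log, max_eq_right h3]
    have hlog2 : Real.log ((n:ℝ) + 1) ≤ Real.log 2 + Real.log n := by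
      rw [← Real.log_mul two_ne_zero hnpos.ne']
      exact Real.log_le_log (by linarith) (by linarith)
    have : Real.log ((n:ℝ)+1) ≤ (q/r) * Real.log n := by nlinarith
    calc Real.log ((n:ℝ)+1) ≤ (q/r) * Real.log n := this
      _ = q * ((1/r) * Real.log n) := by ring
  have hfinal : Log ((n:ℝ) + 1) / Log (pmax (fun k ω' => |X k ω'|) (n+1) ω) ≤ q := by
    rw [div_le_iff₀ (Log_pos _)]
    calc Log ((n:ℝ)+1) ≤ q * ((1/r) * Real.log n) := hnum
      _ ≤ q * Log (pmax (fun k ω' => |X k ω'|) (n+1) ω) :=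
          mul_le_mul_of_nonneg_left hLB (le_trans hr.le hrq.le)
  convert hfinal using 3
  push_cast
  ring

lemma iIndepSet_preimage {Ω : Type*} [MeasurableSpace Ω] {μ : Measure Ω}
    (X : ℕ → Ω → ℝ) (hmeas : ∀ n, Measurable (X n))
    (hindep : iIndepFun X μ)
    (B : ℕ → Set ℝ) (hB : ∀ n, MeasurableSet (B n)) :
    iIndepSet (fun n => X n ⁻¹' B n) μ := by
  rw [iIndepSet_iff_meas_biInter (fun n => (hmeas n) (hB n))]
  intro s
  exact (iIndepFun_iff_measure_inter_preimage_eq_mul.mp hindep) s (fun i _ => hB i)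

lemma bc1 {Ω : Type*} [MeasurableSpace Ω] (μ : Measure Ω) [IsProbabilityMeasure μ]
    (X : ℕ → Ω → ℝ) (hmeas : ∀ n, Measurable (X n))
    (hident : ∀ n, IdentDistrib (X n) (X 0) μ μ) {r : ℝ} (hr : 0 < r)
    (hfin : (∫⁻ ω, ENNReal.ofReal (|X 0 ω| ^ r) ∂μ) < ⊤) :
    ∀ᵐ ω ∂μ, ∀ᶠ n : ℕ in atTop, |X n ω| ^ r ≤ (n : ℝ) + 1 := by
  have hu : Measurable fun x : ℝ => |x| ^ r :=
    (Real.continuous_rpow_const hr.le).measurable.comp measurable_abs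
  set s : ℕ → Set Ω := fun n => {ω | (n : ℝ) + 1 < |X n ω| ^ r} with hs
  have heq : ∀ n, μ (s n) = μ {ω | (n : ℝ) + 1 < |X 0 ω| ^ r} := by
    intro n
    have h := ((hident n).comp hu).measure_mem_eq (measurableSet_Ioi (a := (n:ℝ)+1))
    simpa [Set.preimage, Set.mem_Ioi] using h
  have hsum : ∑' n, μ (s n) ≠ ⊤ := by
    rw [tsum_congr heq]
    exact ((tsum_le_lintegral_ofReal μ _ (hu.comp (hmeas 0))).trans_lt hfin).ne
  filter_upwards [ae_eventually_notMem hsum] with ω hω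
  exact hω.mono fun n hn => not_lt.mp hn

lemma bc2 {Ω : Type*} [MeasurableSpace Ω] (μ : Measure Ω) [IsProbabilityMeasure μ]
    (X : ℕ → Ω → ℝ) (hmeas : ∀ n, Measurable (X n))
    (hindep : iIndepFun X μ)
    (hident : ∀ n, IdentDistrib (X n) (X 0) μ μ) {r : ℝ} (hr : 0 < r)
    (hinf : (∫⁻ ω, ENNReal.ofReal (|X 0 ω| ^ r) ∂μ) = ⊤) :
    ∀ᵐ ω ∂μ, ∃ᶠ n : ℕ in atTop, (n : ℝ) < |X n ω| ^ r := by
  have hu : Measurable fun x : ℝ => |x| ^ r :=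
    (Real.continuous_rpow_const hr.le).measurable.comp measurable_abs
  set B : ℕ → Set ℝ := fun n => {x | (n : ℝ) < |x| ^ r} with hB
  have hBm : ∀ n, MeasurableSet (B n) := fun n => measurableSet_lt measurable_const hu
  set s : ℕ → Set Ω := fun n => X n ⁻¹' B n with hs
  have hsM : ∀ n, MeasurableSet (s n) := fun n => (hmeas n) (hBm n)
  have hsi : iIndepSet s μ := iIndepSet_preimage X hmeas hindep B hBm
  have heq : ∀ n, μ (s n) = μ {ω | (n : ℝ) < |X 0 ω| ^ r} := by
    intro n
    have h := ((hident n).comp hu).measure_mem_eq (measurableSet_Ioi (a := (n:ℝ)))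
    simpa [Set.preimage, Set.mem_Ioi, hs, hB] using h
  have hsum : ∑' n, μ (s n) = ⊤ := by
    rw [tsum_congr heq]
    exact eq_top_iff.mpr (hinf ▸ lintegral_ofReal_le_tsum μ _ (hu.comp (hmeas 0)))
  have h1 := measure_limsup_eq_one hsM hsi hsum
  have hae : ∀ᵐ ω ∂μ, ω ∈ limsup s atTop :=
    (mem_ae_iff_prob_eq_one (MeasurableSet.measurableSet_limsup hsM)).mpr h1
  filter_upwards [hae] with ω hω
  exact (Filter.mem_limsup_iff_frequently_mem.mp hω).mono fun n hn => hn

lemma mem_S_of_le {Ω : Type*} [MeasurableSpace Ω] (μ : Measure Ω) [IsProbabilityMeasure μ]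
    (f : Ω → ℝ) {s t : ℝ}
    (hs : (∫⁻ ω, ENNReal.ofReal (|f ω| ^ s) ∂μ) < ⊤) (ht : 0 ≤ t) (hts : t ≤ s) :
    (∫⁻ ω, ENNReal.ofReal (|f ω| ^ t) ∂μ) < ⊤ := by
  have hb : ∀ ω, ENNReal.ofReal (|f ω| ^ t) ≤ 1 + ENNReal.ofReal (|f ω| ^ s) := by
    intro ω
    rcases le_total (|f ω|) 1 with h | h
    · have h1 : |f ω| ^ t ≤ 1 := Real.rpow_le_one (abs_nonneg _) h ht
      calc ENNReal.ofReal (|f ω| ^ t) ≤ ENNReal.ofReal 1 := ENNReal.ofReal_le_ofReal h1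
        _ = 1 := ENNReal.ofReal_one
        _ ≤ 1 + ENNReal.ofReal (|f ω| ^ s) := le_self_add
    · have h1 : |f ω| ^ t ≤ |f ω| ^ s := Real.rpow_le_rpow_of_exponent_le h hts
      calc ENNReal.ofReal (|f ω| ^ t) ≤ ENNReal.ofReal (|f ω| ^ s) :=
            ENNReal.ofReal_le_ofReal h1
        _ ≤ 1 + ENNReal.ofReal (|f ω| ^ s) := le_add_self
  calc (∫⁻ ω, ENNReal.ofReal (|f ω| ^ t) ∂μ)
      ≤ ∫⁻ ω, (1 + ENNReal.ofReal (|f ω| ^ s)) ∂μ := lintegral_mono hb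
    _ = (∫⁻ _, (1:ℝ≥0∞) ∂μ) + ∫⁻ ω, ENNReal.ofReal (|f ω| ^ s) ∂μ :=
        lintegral_add_left measurable_const _
    _ < ⊤ := by
        rw [lintegral_one, measure_univ]
        exact ENNReal.add_lt_top.mpr ⟨ENNReal.one_lt_top, hs⟩

theorem stmt14 {Ω : Type*} [MeasurableSpace Ω] (μ : Measure Ω) [IsProbabilityMeasure μ]
    (X : ℕ → Ω → ℝ) (hmeas : ∀ n, Measurable (X n))
    (hindep : iIndepFun X μ)
    (hident : ∀ n, IdentDistrib (X n) (X 0) μ μ)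
    (θ : ℝ≥0∞)
    (hθ : θ = sSup (ENNReal.ofReal '' {r : ℝ | 0 ≤ r ∧
        (∫⁻ ω, ENNReal.ofReal (|X 0 ω| ^ r) ∂μ) < ⊤})) :
    ∀ᵐ ω ∂μ,
      Filter.liminf (fun n : ℕ =>
        ENNReal.ofReal (Log n / Log (pmax (fun k ω' => |X k ω'|) n ω))) atTop = θ := by
  have h1 : ∀ q : ℚ, (0:ℝ) ≤ (q:ℝ) →
      (∫⁻ ω, ENNReal.ofReal (|X 0 ω| ^ (q:ℝ)) ∂μ) < ⊤ →
      ∀ᵐ ω ∂μ, ENNReal.ofReal (q:ℝ) ≤ Filter.liminf (fun n : ℕ =>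
        ENNReal.ofReal (Log n / Log (pmax (fun k ω' => |X k ω'|) n ω))) atTop := by
    intro q hq0 hfin
    rcases hq0.eq_or_lt with h0 | h0
    · refine ae_of_all μ fun ω => ?_
      rw [← h0]
      simp
    · filter_upwards [bc1 μ X hmeas hident h0 hfin] with ω hω
      obtain ⟨N, hN⟩ := eventually_atTop.mp hω
      have hA := dirA X ω h0 (N := N + 1) (Nat.succ_ne_zero N)
        (fun k hk => hN k (le_trans (Nat.le_succ N) hk))
      refine le_liminf_of_le (by isBoundedDefault) ?_
      exact hA.mono fun n hn => ENNReal.ofReal_le_ofReal hn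
  have h1' : ∀ᵐ ω ∂μ, ∀ q : ℚ, (0:ℝ) ≤ (q:ℝ) →
      (∫⁻ ω, ENNReal.ofReal (|X 0 ω| ^ (q:ℝ)) ∂μ) < ⊤ →
      ENNReal.ofReal (q:ℝ) ≤ Filter.liminf (fun n : ℕ =>
        ENNReal.ofReal (Log n / Log (pmax (fun k ω' => |X k ω'|) n ω))) atTop := by
    rw [ae_all_iff]
    intro q
    by_cases hq : (0:ℝ) ≤ (q:ℝ) ∧ (∫⁻ ω, ENNReal.ofReal (|X 0 ω| ^ (q:ℝ)) ∂μ) < ⊤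
    · exact (h1 q hq.1 hq.2).mono fun ω h hh1 hh2 => h
    · refine ae_of_all μ fun ω hh1 hh2 => absurd ⟨hh1, hh2⟩ hq
  have h2 : ∀ q : ℚ, θ < ENNReal.ofReal (q:ℝ) →
      ∀ᵐ ω ∂μ, Filter.liminf (fun n : ℕ =>
        ENNReal.ofReal (Log n / Log (pmax (fun k ω' => |X k ω'|) n ω))) atTop ≤
        ENNReal.ofReal (q:ℝ) := by
    intro q hq
    obtain ⟨q', hq'0, hq'1, hq'2⟩ := ENNReal.lt_iff_exists_rat_btwn.mp hq
    have hco : ((Real.toNNReal (q':ℝ)) : ℝ≥0∞) = ENNReal.ofReal (q':ℝ) := rfl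
    rw [hco] at hq'1 hq'2
    have hrpos : (0:ℝ) < (q':ℝ) := by
      by_contra h
      push_neg at h
      rw [ENNReal.ofReal_eq_zero.mpr h] at hq'1
      exact (not_lt_of_ge (zero_le : 0 ≤ θ)) hq'1
    have hqpos : (0:ℝ) < (q:ℝ) := by
      by_contra h
      push_neg at h
      rw [ENNReal.ofReal_eq_zero.mpr h] at hq'2
      exact (not_lt_of_ge (zero_le : (0:ℝ≥0∞) ≤ ENNReal.ofReal (q':ℝ))) hq'2
    have hlt : (q':ℝ) < (q:ℝ) := (ENNReal.ofReal_lt_ofReal_iff hqpos).mp hq'2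
    have hinf : (∫⁻ ω, ENNReal.ofReal (|X 0 ω| ^ (q':ℝ)) ∂μ) = ⊤ := by
      by_contra h
      have hmem : ENNReal.ofReal (q':ℝ) ≤ θ := by
        rw [hθ]
        exact le_sSup ⟨(q':ℝ), ⟨hrpos.le, lt_top_iff_ne_top.mpr h⟩, rfl⟩
      exact absurd hq'1 (not_lt_of_ge hmem)
    filter_upwards [bc2 μ X hmeas hindep hident hrpos hinf] with ω hω
    refine liminf_le_of_frequently_le' ?_
    exact (dirB X ω hrpos hlt hω).mono fun m hm => ENNReal.ofReal_le_ofReal hm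
  have h2' : ∀ᵐ ω ∂μ, ∀ q : ℚ, θ < ENNReal.ofReal (q:ℝ) →
      Filter.liminf (fun n : ℕ =>
        ENNReal.ofReal (Log n / Log (pmax (fun k ω' => |X k ω'|) n ω))) atTop ≤
        ENNReal.ofReal (q:ℝ) := by
    rw [ae_all_iff]
    intro q
    by_cases hq : θ < ENNReal.ofReal (q:ℝ)
    · exact (h2 q hq).mono fun ω h _ => h
    · exact ae_of_all μ fun ω h => absurd h hq
  filter_upwards [h1', h2'] with ω hup hdown
  refine le_antisymm ?_ ?_
  · by_contra h
    push_neg at h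
    obtain ⟨q, hq0, hq1, hq2⟩ := ENNReal.lt_iff_exists_rat_btwn.mp h
    have hco : ((Real.toNNReal (q:ℝ)) : ℝ≥0∞) = ENNReal.ofReal (q:ℝ) := rfl
    rw [hco] at hq1 hq2
    exact absurd (hdown q hq1) (not_le_of_gt hq2)
  · by_contra h
    push_neg at h
    rw [hθ] at h
    obtain ⟨b, ⟨rr, hrrS, rfl⟩, hb⟩ := lt_sSup_iff.mp h
    obtain ⟨q, hq0, hq1, hq2⟩ := ENNReal.lt_iff_exists_rat_btwn.mp hb
    have hco : ((Real.toNNReal (q:ℝ)) : ℝ≥0∞) = ENNReal.ofReal (q:ℝ) := rfl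
    rw [hco] at hq1 hq2
    have hrrpos : 0 < rr := ENNReal.ofReal_pos.mp ((zero_le : (0:ℝ≥0∞) ≤ _).trans_lt hq2)
    have hqr : (q:ℝ) < rr := (ENNReal.ofReal_lt_ofReal_iff hrrpos).mp hq2
    have hfin : (∫⁻ ω, ENNReal.ofReal (|X 0 ω| ^ (q:ℝ)) ∂μ) < ⊤ :=
      mem_S_of_le μ (X 0) hrrS.2 (by exact_mod_cast hq0) hqr.le
    exact absurd (hup q (by exact_mod_cast hq0) hfin) (not_le_of_gt hq1)
end

section
/- Let {X_n} be i.i.d. with P(X > x) ~ exp(−φ(x) + H(x)) as x → ∞, where φ : (0,∞) → (0,∞) is increasing and continuous, H(x)/φ(x) → 0, and φ^{−1}(x + o(x))/φ^{−1}(x) → 1 for every function o(x) with o(x)/x → 0. Then (max_{1≤k≤n} X_k)/φ^{−1}(log n) → 1 almost surely. -/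
open MeasureTheory ProbabilityTheory Filter
open scoped ENNReal

set_option maxHeartbeats 1000000

private lemma psi_ratio_tendsto (ψ : ℝ → ℝ)
    (hψreg : ∀ g : ℝ → ℝ, Tendsto (fun x => g x / x) atTop (nhds 0) →
        Tendsto (fun x => ψ (x + g x) / ψ x) atTop (nhds 1))
    (u : ℕ → ℝ) (hu : StrictMono u) (hu2 : Tendsto u atTop atTop)
    (d : ℕ → ℝ) (hd : Tendsto d atTop (nhds 0)) :
    Tendsto (fun k => ψ (u k + d k * u k) / ψ (u k)) atTop (nhds 1) := by
  classical
  set g : ℝ → ℝ := fun x => if h : ∃ k, u k = x then d h.choose * x else 0 with hg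
  have hgu : ∀ k, g (u k) = d k * u k := by
    intro k
    have h : ∃ j, u j = u k := ⟨k, rfl⟩
    have hch : h.choose = k := hu.injective h.choose_spec
    simp only [hg, dif_pos h, hch]
  have hg0 : Tendsto (fun x => g x / x) atTop (nhds 0) := by
    rw [NormedAddCommGroup.tendsto_nhds_zero]
    intro ε hε
    obtain ⟨K, hK⟩ := eventually_atTop.mp ((NormedAddCommGroup.tendsto_nhds_zero.mp hd) ε hε)
    filter_upwards [eventually_ge_atTop (max 1 (u K))] with x hx
    have hx1 : (1:ℝ) ≤ x := le_trans (le_max_left _ _) hx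
    by_cases h : ∃ k, u k = x
    · have hk : K ≤ h.choose := by
        rw [← hu.le_iff_le]
        rw [h.choose_spec]
        exact le_trans (le_max_right _ _) hx
      have : g x = d h.choose * x := by simp only [hg, dif_pos h]
      rw [this, mul_div_assoc, div_self (by linarith), mul_one]
      exact hK _ hk
    · have : g x = 0 := by simp only [hg, dif_neg h]
      rw [this, zero_div]
      simpa using hε
  have h2 := (hψreg g hg0).comp hu2
  refine h2.congr fun k => ?_
  simp only [Function.comp_apply, hgu]

private lemma psi_reg_upper (ψ : ℝ → ℝ)
    (hψreg : ∀ g : ℝ → ℝ, Tendsto (fun x => g x / x) atTop (nhds 0) →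
        Tendsto (fun x => ψ (x + g x) / ψ x) atTop (nhds 1))
    (hψ1 : ∀ᶠ y in atTop, (1:ℝ) ≤ ψ y) {ε : ℝ} (hε : 0 < ε) :
    ∃ δ : ℝ, 0 < δ ∧ δ < 1 ∧ ∀ᶠ x in atTop, ψ ((1 + δ) * x) ≤ (1 + ε) * ψ x := by
  by_contra hcon
  push_neg at hcon
  have hfreq : ∀ δ : ℝ, 0 < δ → δ < 1 → ∀ a : ℝ, ∃ x, a ≤ x ∧ (1 + ε) * ψ x < ψ ((1 + δ) * x) := by
    intro δ h1 h2 a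
    obtain ⟨x, hx1, hx2⟩ := (frequently_atTop.mp (not_eventually.mp (hcon δ h1 h2))) a
    exact ⟨x, hx1, not_not.mp hx2⟩
  have hstep : ∀ (k : ℕ) (a : ℝ), ∃ x, a ≤ x ∧
      (1 + ε) * ψ x < ψ ((1 + 1/((k:ℝ)+2)) * x) := by
    intro k a
    refine hfreq (1/((k:ℝ)+2)) (by positivity) ?_ a
    rw [div_lt_one (by positivity)]; linarith
  choose f hf1 hf2 using hstep
  let u : ℕ → ℝ := fun k => Nat.rec (f 0 0) (fun k xk => f (k+1) (max ((k:ℝ)+2) (xk+1))) k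
  have hu0 : ∀ k, u (k+1) = f (k+1) (max ((k:ℝ)+2) (u k + 1)) := fun k => rfl
  have humono : StrictMono u := by
    apply strictMono_nat_of_lt_succ
    intro k
    have h := hf1 (k+1) (max ((k:ℝ)+2) (u k + 1))
    rw [← hu0] at h
    have := le_trans (le_max_right ((k:ℝ)+2) (u k + 1)) h
    linarith
  have hucast : ∀ k : ℕ, (k:ℝ) ≤ u k := by
    intro k
    cases k with
    | zero => exact_mod_cast hf1 0 0
    | succ k =>
      have h := hf1 (k+1) (max ((k:ℝ)+2) (u k + 1))
      rw [← hu0] at h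
      have := le_trans (le_max_left ((k:ℝ)+2) (u k + 1)) h
      push_cast
      linarith
  have hutop : Tendsto u atTop atTop :=
    tendsto_atTop_mono hucast tendsto_natCast_atTop_atTop
  have hprop : ∀ k : ℕ, (1 + ε) * ψ (u k) < ψ ((1 + 1/((k:ℝ)+2)) * u k) := by
    intro k
    cases k with
    | zero => exact hf2 0 0
    | succ k =>
      have h := hf2 (k+1) (max ((k:ℝ)+2) (u k + 1))
      rw [← hu0] at h
      convert h using 4 <;> push_cast <;> ring
  have hd : Tendsto (fun k : ℕ => 1/((k:ℝ)+2)) atTop (nhds 0) := by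
    simp only [one_div]
    exact (tendsto_atTop_add_const_right atTop 2 tendsto_natCast_atTop_atTop).inv_tendsto_atTop
  have htend := psi_ratio_tendsto ψ hψreg u humono hutop _ hd
  have hlt := htend.eventually_lt_const (show (1:ℝ) < 1 + ε by linarith)
  have hψu : ∀ᶠ k : ℕ in atTop, (1:ℝ) ≤ ψ (u k) := hutop.eventually hψ1
  obtain ⟨k, h1, h2⟩ := (hlt.and hψu).exists
  have h3 := hprop k
  have h4 : u k + 1/((k:ℝ)+2) * u k = (1 + 1/((k:ℝ)+2)) * u k := by ring
  rw [h4] at h1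
  have h5 : ψ ((1 + 1/((k:ℝ)+2)) * u k) < (1 + ε) * ψ (u k) :=
    (div_lt_iff₀ (by linarith)).mp h1
  linarith

private lemma psi_reg_lower (ψ : ℝ → ℝ)
    (hψreg : ∀ g : ℝ → ℝ, Tendsto (fun x => g x / x) atTop (nhds 0) →
        Tendsto (fun x => ψ (x + g x) / ψ x) atTop (nhds 1))
    (hψ1 : ∀ᶠ y in atTop, (1:ℝ) ≤ ψ y) {ε : ℝ} (hε : 0 < ε) :
    ∃ δ : ℝ, 0 < δ ∧ δ < 1 ∧ ∀ᶠ x in atTop, (1 - ε) * ψ x ≤ ψ ((1 - δ) * x) := by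
  by_contra hcon
  push_neg at hcon
  have hfreq : ∀ δ : ℝ, 0 < δ → δ < 1 → ∀ a : ℝ, ∃ x, a ≤ x ∧ ψ ((1 - δ) * x) < (1 - ε) * ψ x := by
    intro δ h1 h2 a
    obtain ⟨x, hx1, hx2⟩ := (frequently_atTop.mp (not_eventually.mp (hcon δ h1 h2))) a
    exact ⟨x, hx1, not_not.mp hx2⟩
  have hstep : ∀ (k : ℕ) (a : ℝ), ∃ x, a ≤ x ∧
      ψ ((1 - 1/((k:ℝ)+2)) * x) < (1 - ε) * ψ x := by
    intro k a
    refine hfreq (1/((k:ℝ)+2)) (by positivity) ?_ a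
    rw [div_lt_one (by positivity)]; linarith
  choose f hf1 hf2 using hstep
  let u : ℕ → ℝ := fun k => Nat.rec (f 0 0) (fun k xk => f (k+1) (max ((k:ℝ)+2) (xk+1))) k
  have hu0 : ∀ k, u (k+1) = f (k+1) (max ((k:ℝ)+2) (u k + 1)) := fun k => rfl
  have humono : StrictMono u := by
    apply strictMono_nat_of_lt_succ
    intro k
    have h := hf1 (k+1) (max ((k:ℝ)+2) (u k + 1))
    rw [← hu0] at h
    have := le_trans (le_max_right ((k:ℝ)+2) (u k + 1)) h
    linarith
  have hucast : ∀ k : ℕ, (k:ℝ) ≤ u k := by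
    intro k
    cases k with
    | zero => exact_mod_cast hf1 0 0
    | succ k =>
      have h := hf1 (k+1) (max ((k:ℝ)+2) (u k + 1))
      rw [← hu0] at h
      have := le_trans (le_max_left ((k:ℝ)+2) (u k + 1)) h
      push_cast
      linarith
  have hutop : Tendsto u atTop atTop :=
    tendsto_atTop_mono hucast tendsto_natCast_atTop_atTop
  have hprop : ∀ k : ℕ, ψ ((1 - 1/((k:ℝ)+2)) * u k) < (1 - ε) * ψ (u k) := by
    intro k
    cases k with
    | zero => exact hf2 0 0
    | succ k =>
      have h := hf2 (k+1) (max ((k:ℝ)+2) (u k + 1))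
      rw [← hu0] at h
      convert h using 4 <;> push_cast <;> ring
  have hd : Tendsto (fun k : ℕ => -(1/((k:ℝ)+2))) atTop (nhds 0) := by
    rw [show (0:ℝ) = -0 by ring]
    apply Tendsto.neg
    simp only [one_div]
    exact (tendsto_atTop_add_const_right atTop 2 tendsto_natCast_atTop_atTop).inv_tendsto_atTop
  have htend := psi_ratio_tendsto ψ hψreg u humono hutop _ hd
  have hlt := htend.eventually_const_lt (show 1 - ε < (1:ℝ) by linarith)
  have hψu : ∀ᶠ k : ℕ in atTop, (1:ℝ) ≤ ψ (u k) := hutop.eventually hψ1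
  obtain ⟨k, h1, h2⟩ := (hlt.and hψu).exists
  have h3 := hprop k
  have h4 : u k + -(1/((k:ℝ)+2)) * u k = (1 - 1/((k:ℝ)+2)) * u k := by ring
  rw [h4] at h1
  have h5 : (1 - ε) * ψ (u k) < ψ ((1 - 1/((k:ℝ)+2)) * u k) :=
    (lt_div_iff₀ (by linarith)).mp h1
  linarith

theorem stmt18 {Ω : Type*} [MeasurableSpace Ω] (μ : Measure Ω) [IsProbabilityMeasure μ]
    (X : ℕ → Ω → ℝ) (hmeas : ∀ n, Measurable (X n))
    (hindep : iIndepFun X μ)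
    (hident : ∀ n, IdentDistrib (X n) (X 0) μ μ)
    (φ ψ H : ℝ → ℝ)
    (hφpos : ∀ x : ℝ, 0 < x → 0 < φ x)
    (hφmono : StrictMonoOn φ (Set.Ioi (0 : ℝ)))
    (hφcont : ContinuousOn φ (Set.Ioi (0 : ℝ)))
    (hψinv : ∀ x : ℝ, 0 < x → ψ (φ x) = x)
    (hψreg : ∀ g : ℝ → ℝ, Tendsto (fun x => g x / x) atTop (nhds 0) →
        Tendsto (fun x => ψ (x + g x) / ψ x) atTop (nhds 1))
    (hH : Tendsto (fun x => H x / φ x) atTop (nhds 0))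
    (htail : Tendsto (fun x : ℝ =>
        (μ {ω | X 0 ω > x}).toReal / Real.exp (-φ x + H x)) atTop (nhds 1)) :
    ∀ᵐ ω ∂μ, Tendsto (fun n : ℕ => pmax X n ω / ψ (Log n)) atTop (nhds 1) := by
  classical
  -- the tail probability tends to zero
  have hmeasIoi : ∀ c : ℝ, MeasurableSet {ω | X 0 ω > c} := fun c => hmeas 0 measurableSet_Ioi
  have h0 : Tendsto (fun x : ℝ => (μ {ω | X 0 ω > x}).toReal) atTop (nhds 0) := by
    have hseq : Tendsto (fun n : ℕ => μ {ω | X 0 ω > (n:ℝ)}) atTop (nhds 0) := by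
      have hiInter : (⋂ n : ℕ, {ω | X 0 ω > (n:ℝ)}) = ∅ := by
        ext ω
        simp only [Set.mem_iInter, Set.mem_setOf_eq, Set.mem_empty_iff_false, iff_false, not_forall,
          not_lt]
        obtain ⟨n, hn⟩ := exists_nat_gt (X 0 ω)
        exact ⟨n, le_of_lt hn⟩
      have := tendsto_measure_iInter_atTop (μ := μ) (s := fun n : ℕ => {ω | X 0 ω > (n:ℝ)})
        (fun n => (hmeasIoi _).nullMeasurableSet)
        (by
          intro m n hmn ω hω
          simp only [Set.mem_setOf_eq] at *
          exact lt_of_le_of_lt (Nat.cast_le.mpr hmn) hω)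
        ⟨0, measure_ne_top μ _⟩
      rw [hiInter] at this
      simpa [Function.comp_def] using this
    have hseqR : Tendsto (fun n : ℕ => (μ {ω | X 0 ω > (n:ℝ)}).toReal) atTop (nhds 0) := by
      have := (ENNReal.tendsto_toReal (by simp : (0:ℝ≥0∞) ≠ ⊤)).comp hseq
      simpa [Function.comp_def] using this
    apply tendsto_of_tendsto_of_tendsto_of_le_of_le' (g := fun _ : ℝ => (0:ℝ))
      (h := fun x : ℝ => (μ {ω | X 0 ω > (⌊x⌋₊ : ℝ)}).toReal)
      tendsto_const_nhds (hseqR.comp tendsto_nat_floor_atTop)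
    · exact Eventually.of_forall fun x => ENNReal.toReal_nonneg
    · filter_upwards [eventually_ge_atTop (0:ℝ)] with x hx
      apply ENNReal.toReal_mono (measure_ne_top μ _)
      apply measure_mono
      intro ω hω
      exact lt_of_le_of_lt (Nat.floor_le hx) hω
  -- exp(-φ+H) → 0
  have hexp0 : Tendsto (fun x => Real.exp (-φ x + H x)) atTop (nhds 0) := by
    apply tendsto_of_tendsto_of_tendsto_of_le_of_le' (g := fun _ : ℝ => (0:ℝ))
      (h := fun x => 2 * (μ {ω | X 0 ω > x}).toReal) tendsto_const_nhds (by simpa using h0.const_mul 2)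
    · exact Eventually.of_forall fun x => (Real.exp_pos _).le
    · filter_upwards [htail.eventually_const_lt (show (1/2:ℝ) < 1 by norm_num)] with x hx
      have he := Real.exp_pos (-φ x + H x)
      have := (lt_div_iff₀ he).mp hx
      linarith
  -- φ - H → ∞, φ → ∞
  have hφH : Tendsto (fun x => φ x - H x) atTop atTop := by
    have h1 : Tendsto (fun x => -φ x + H x) atTop atBot :=
      Real.tendsto_exp_comp_nhds_zero.mp hexp0
    have h2 : Tendsto (fun x => -(-φ x + H x)) atTop atTop := tendsto_neg_atTop_iff.mpr h1
    refine h2.congr fun x => by ring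
  have hφpos' : ∀ᶠ x : ℝ in atTop, 0 < φ x := by
    filter_upwards [eventually_ge_atTop (1:ℝ)] with x hx
    exact hφpos x (by linarith)
  have hφtop : Tendsto φ atTop atTop := by
    apply tendsto_atTop_mono' atTop ?_ (hφH.const_mul_atTop (show (0:ℝ) < 2/3 by norm_num))
    filter_upwards [NormedAddCommGroup.tendsto_nhds_zero.mp hH (1/2) (by norm_num), hφpos']
      with x h1 h2
    rw [Real.norm_eq_abs, abs_div, abs_of_pos h2, div_lt_iff₀ h2] at h1
    have h3 := neg_abs_le (H x)
    nlinarith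
  -- basic facts about ψ
  have hψ1y : ∀ y : ℝ, φ 1 ≤ y → 1 ≤ ψ y ∧ φ (ψ y) = y := by
    intro y hy
    obtain ⟨b, hb1, hb2⟩ := ((hφtop.eventually_ge_atTop y).and (eventually_ge_atTop (1:ℝ))).exists
    have hsub : Set.Icc (1:ℝ) b ⊆ Set.Ioi 0 := fun x hx => lt_of_lt_of_le one_pos hx.1
    have hIVT := intermediate_value_Icc hb2 (hφcont.mono hsub)
    obtain ⟨a, ⟨ha1, _⟩, hay⟩ := hIVT ⟨hy, hb1⟩
    have ha0 : 0 < a := lt_of_lt_of_le one_pos ha1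
    constructor
    · rw [← hay, hψinv a ha0]; exact ha1
    · rw [← hay, hψinv a ha0]
  have hψmono : ∀ y z : ℝ, φ 1 ≤ y → y ≤ z → ψ y ≤ ψ z := by
    intro y z hy hyz
    obtain ⟨hy1, hy2⟩ := hψ1y y hy
    obtain ⟨hz1, hz2⟩ := hψ1y z (le_trans hy hyz)
    by_contra h
    push_neg at h
    have := hφmono (Set.mem_Ioi.mpr (by linarith : (0:ℝ) < ψ z))
      (Set.mem_Ioi.mpr (by linarith : (0:ℝ) < ψ y)) h
    rw [hy2, hz2] at this
    linarith
  have hψtop : Tendsto ψ atTop atTop := by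
    rw [tendsto_atTop]
    intro C
    filter_upwards [eventually_ge_atTop (max (φ 1) (φ (max C 1)))] with y hy
    have h1 : φ 1 ≤ y := le_trans (le_max_left _ _) hy
    have h2 : φ (max C 1) ≤ y := le_trans (le_max_right _ _) hy
    obtain ⟨hψy1, hψyφ⟩ := hψ1y y h1
    have : max C 1 ≤ ψ y := by
      by_contra h
      push_neg at h
      have := hφmono (Set.mem_Ioi.mpr (by linarith : (0:ℝ) < ψ y))
        (Set.mem_Ioi.mpr (by positivity : (0:ℝ) < max C 1)) h
      rw [hψyφ] at this
      linarith
    exact le_trans (le_max_left _ _) this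
  have hψ1ev : ∀ᶠ y : ℝ in atTop, (1:ℝ) ≤ ψ y := by
    filter_upwards [eventually_ge_atTop (φ 1)] with y hy
    exact (hψ1y y hy).1
  -- facts about Log
  have hLog1 : ∀ x : ℝ, 1 ≤ Log x := by
    intro x
    have h := Real.log_le_log (Real.exp_pos 1) (le_max_left (Real.exp 1) x)
    rwa [Real.log_exp] at h
  have hLogmono : Monotone Log := by
    intro a b hab
    exact Real.log_le_log (lt_of_lt_of_le (Real.exp_pos 1) (le_max_left _ _))
      (max_le_max le_rfl hab)
  have hLogtop : Tendsto Log atTop atTop := by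
    apply Real.tendsto_log_atTop.comp
    exact tendsto_atTop_mono (fun x => le_max_right (Real.exp 1) x) tendsto_id
  have hLogn : Tendsto (fun n : ℕ => Log (n:ℝ)) atTop atTop :=
    hLogtop.comp tendsto_natCast_atTop_atTop
  have hLogeq : ∀ n : ℕ, 3 ≤ n → Log (n:ℝ) = Real.log (n:ℝ) := by
    intro n hn
    unfold Log
    rw [max_eq_right]
    calc Real.exp 1 ≤ 3 := by
          have := Real.exp_one_lt_d9; linarith
      _ ≤ (n:ℝ) := by exact_mod_cast hn
  -- two-sided tail bounds
  have htb : ∀ᶠ x : ℝ in atTop,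
      (μ {ω | X 0 ω > x}).toReal ≤ 2 * Real.exp (-φ x + H x) ∧
      Real.exp (-φ x + H x) ≤ 2 * (μ {ω | X 0 ω > x}).toReal := by
    filter_upwards [htail.eventually_lt_const (show (1:ℝ) < 2 by norm_num),
      htail.eventually_const_lt (show (1/2:ℝ) < 1 by norm_num)] with x h1 h2
    have he := Real.exp_pos (-φ x + H x)
    constructor
    · have := (div_lt_iff₀ he).mp h1; linarith
    · have := (lt_div_iff₀ he).mp h2; linarith
  have hHsmall : ∀ c : ℝ, 0 < c → ∀ᶠ x : ℝ in atTop, |H x| ≤ c * φ x := by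
    intro c hc
    filter_upwards [NormedAddCommGroup.tendsto_nhds_zero.mp hH c hc, hφpos'] with x h1 h2
    rw [Real.norm_eq_abs, abs_div, abs_of_pos h2, div_lt_iff₀ h2] at h1
    linarith
  -- upper bound
  have upper : ∀ ε : ℝ, 0 < ε →
      ∀ᵐ ω ∂μ, ∀ᶠ n : ℕ in atTop, pmax X n ω ≤ (1+ε) * ψ (Log n) := by
    intro ε hε
    obtain ⟨δ, hδ0, hδ1, hδprop⟩ := psi_reg_upper ψ hψreg hψ1ev hε
    set b : ℕ → ℝ := fun n => ψ ((1+δ) * Log n) with hbdef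
    have hLδ : Tendsto (fun n : ℕ => (1+δ) * Log n) atTop atTop :=
      hLogn.const_mul_atTop (by linarith)
    have hbtop : Tendsto b atTop atTop := hψtop.comp hLδ
    set A : ℕ → Set Ω := fun n => {ω | X n ω > b n} with hA
    have hAeq : ∀ n, μ (A n) = μ {ω | X 0 ω > b n} := by
      intro n
      have := (hident n).measure_mem_eq (measurableSet_Ioi (a := b n))
      simpa [hA, Set.preimage, Set.mem_Ioi] using this
    have hkey : ∀ᶠ n : ℕ in atTop, (μ (A n)).toReal ≤ 2 * (n:ℝ) ^ (-(1+δ/2)) := by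
      filter_upwards [hbtop.eventually htb,
        hbtop.eventually (hHsmall (δ/(2*(1+δ))) (by positivity)),
        hLδ.eventually_ge_atTop (φ 1), eventually_ge_atTop 3] with n h1 h2 h3 hn3
      have hφb : φ (b n) = (1+δ) * Log n := (hψ1y _ h3).2
      have hL1 : (1:ℝ) ≤ Log n := hLog1 _
      have hHb : H (b n) ≤ (δ/2) * Log n := by
        have := le_trans (le_abs_self _) h2
        rw [hφb] at this
        have heq : (δ/(2*(1+δ))) * ((1+δ) * Log n) = (δ/2) * Log n := by
          field_simp
        linarith [heq ▸ this]
      have hexp : -φ (b n) + H (b n) ≤ -(1+δ/2) * Log n := by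
        rw [hφb]; linarith
      have hq : (μ (A n)).toReal ≤ 2 * Real.exp (-(1+δ/2) * Log n) := by
        rw [hAeq n]
        calc (μ {ω | X 0 ω > b n}).toReal ≤ 2 * Real.exp (-φ (b n) + H (b n)) := h1.1
          _ ≤ 2 * Real.exp (-(1+δ/2) * Log n) := by
              have := Real.exp_le_exp.mpr hexp; linarith
      have hrw : Real.exp (-(1+δ/2) * Log n) = (n:ℝ) ^ (-(1+δ/2)) := by
        rw [hLogeq n hn3, Real.rpow_def_of_pos (by positivity : (0:ℝ) < (n:ℝ))]
        ring_nf
      rw [hrw] at hq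
      exact hq
    have hsummand : Summable (fun n : ℕ => 2 * (n:ℝ) ^ (-(1+δ/2))) :=
      (Real.summable_nat_rpow.mpr (by linarith)).mul_left 2
    obtain ⟨N, hN⟩ := eventually_atTop.mp hkey
    have hTsum : Summable (fun n : ℕ => (μ (A n)).toReal) := by
      rw [← summable_nat_add_iff N]
      apply Summable.of_nonneg_of_le (fun k => ENNReal.toReal_nonneg)
        (fun k => hN (k+N) (Nat.le_add_left N k))
      exact (summable_nat_add_iff N).mpr hsummand
    have hsum : (∑' n, μ (A n)) ≠ ⊤ := by
      rw [show (fun n => μ (A n)) = fun n => ((μ (A n)).toNNReal : ℝ≥0∞) from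
        funext fun n => (ENNReal.coe_toNNReal (measure_ne_top μ _)).symm]
      rw [ENNReal.tsum_coe_ne_top_iff_summable]
      exact NNReal.summable_coe.mp (by simpa [ENNReal.coe_toNNReal, measure_ne_top, ENNReal.coe_toNNReal_eq_toReal] using hTsum)
    filter_upwards [ae_eventually_notMem hsum] with ω hω
    have e2 : ∀ᶠ n : ℕ in atTop, φ 1 ≤ (1+δ) * Log n := hLδ.eventually_ge_atTop (φ 1)
    obtain ⟨N₀, hN₀⟩ := eventually_atTop.mp (hω.and e2)
    set C : ℝ := (Finset.range (N₀+1)).sup' (Finset.nonempty_range_iff.mpr (Nat.succ_ne_zero N₀))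
      (fun k => X k ω) with hC
    have e3 : ∀ᶠ n : ℕ in atTop, ψ ((1+δ) * Log n) ≤ (1+ε) * ψ (Log n) :=
      hLogn.eventually hδprop
    have e4 : ∀ᶠ n : ℕ in atTop, max C 0 ≤ ψ (Log n) :=
      (hψtop.comp hLogn).eventually_ge_atTop (max C 0)
    filter_upwards [e3, e4, eventually_ge_atTop (N₀+1)] with n h3 h4 hn
    have hn0 : n ≠ 0 := by omega
    rw [pmax, dif_neg hn0]
    apply Finset.sup'_le
    intro k hk
    rw [Finset.mem_range] at hk
    have hψnn : 0 ≤ ψ (Log n) := le_trans (le_max_right C 0) h4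
    by_cases hkN : k ≤ N₀
    · have hXC : X k ω ≤ C := Finset.le_sup' (fun k => X k ω) (Finset.mem_range.mpr (by omega))
      have : C ≤ ψ (Log n) := le_trans (le_max_left C 0) h4
      nlinarith
    · have hkN' : N₀ ≤ k := by omega
      have hXk : X k ω ≤ b k := not_lt.mp (hN₀ k hkN').1
      have hbk : b k ≤ b n := by
        apply hψmono _ _ (hN₀ k hkN').2
        apply mul_le_mul_of_nonneg_left _ (by linarith : (0:ℝ) ≤ 1+δ)
        exact hLogmono (Nat.cast_le.mpr (by omega))
      calc X k ω ≤ b k := hXk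
        _ ≤ b n := hbk
        _ ≤ (1+ε) * ψ (Log n) := h3
  -- lower bound
  have lower : ∀ ε : ℝ, 0 < ε →
      ∀ᵐ ω ∂μ, ∀ᶠ n : ℕ in atTop, (1-ε) * ψ (Log n) ≤ pmax X n ω := by
    intro ε hε
    obtain ⟨δ, hδ0, hδ1, hδprop⟩ := psi_reg_lower ψ hψreg hψ1ev hε
    set c : ℕ → ℝ := fun n => ψ ((1-δ) * Log n) with hcdef
    have hLδ : Tendsto (fun n : ℕ => (1-δ) * Log n) atTop atTop :=
      hLogn.const_mul_atTop (by linarith)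
    have hctop : Tendsto c atTop atTop := hψtop.comp hLδ
    set Cs : ℕ → Set Ω := fun n => ⋂ k ∈ Finset.range n, {ω | X k ω ≤ c n} with hCs
    set p : ℕ → ℝ := fun n => (μ {ω | X 0 ω > c n}).toReal with hp
    have hp0 : ∀ n, 0 ≤ p n := fun n => ENNReal.toReal_nonneg
    have hp1 : ∀ n, p n ≤ 1 := by
      intro n
      rw [hp]
      have := prob_le_one (μ := μ) (s := {ω | X 0 ω > c n})
      calc (μ {ω | X 0 ω > c n}).toReal ≤ (1:ℝ≥0∞).toReal :=
        ENNReal.toReal_mono (by simp) this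
        _ = 1 := by simp
    have hCeq : ∀ n, (μ (Cs n)).toReal = (1 - p n) ^ n := by
      intro n
      have h1 : μ (Cs n) = ∏ k ∈ Finset.range n, μ {ω | X k ω ≤ c n} := by
        apply hindep.meas_biInter
        intro k _
        exact ⟨Set.Iic (c n), measurableSet_Iic, rfl⟩
      have h2 : ∀ k, μ {ω | X k ω ≤ c n} = μ {ω | X 0 ω ≤ c n} := by
        intro k
        have := (hident k).measure_mem_eq (measurableSet_Iic (a := c n))
        simpa [Set.preimage, Set.mem_Iic] using this
      have h3 : (μ {ω | X 0 ω ≤ c n}).toReal = 1 - p n := by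
        have hcompl : {ω | X 0 ω ≤ c n} = {ω | X 0 ω > c n}ᶜ := by
          ext ω; simp [not_lt]
        rw [hcompl, prob_compl_eq_one_sub (hmeasIoi (c n)),
          ENNReal.toReal_sub_of_le prob_le_one (by simp), ENNReal.toReal_one]
      rw [h1, Finset.prod_congr rfl (fun k _ => h2 k), Finset.prod_const, Finset.card_range,
        ENNReal.toReal_pow, h3]
    have hkey : ∀ᶠ n : ℕ in atTop, (μ (Cs n)).toReal ≤ (n:ℝ) ^ (-(2:ℝ)) := by
      have hlo := (isLittleO_log_rpow_atTop (show (0:ℝ) < δ/2 by linarith)).bound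
        (show (0:ℝ) < 1/4 by norm_num)
      filter_upwards [hctop.eventually htb,
        hctop.eventually (hHsmall ((δ/2)/(1-δ)) (by
          apply div_pos <;> linarith)),
        hLδ.eventually_ge_atTop (φ 1), eventually_ge_atTop 3,
        tendsto_natCast_atTop_atTop.eventually hlo] with n h1 h2 h3 hn3 hlon
      have hφc : φ (c n) = (1-δ) * Log n := (hψ1y _ h3).2
      have hL1 : (1:ℝ) ≤ Log n := hLog1 _
      have hnpos : (0:ℝ) < (n:ℝ) := by positivity
      have hHc : -((δ/2) * Log n) ≤ H (c n) := by
        have := le_trans (neg_abs_le _) (le_of_neg_le_neg (neg_le_neg h2))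
        have h2' : -(((δ/2)/(1-δ)) * φ (c n)) ≤ H (c n) := by
          have := neg_abs_le (H (c n)); linarith [h2]
        rw [hφc] at h2'
        have h1δ : (1-δ) ≠ 0 := by linarith
        have heq : ((δ/2)/(1-δ)) * ((1-δ) * Log n) = (δ/2) * Log n := by
          field_simp
        linarith [heq ▸ h2']
      have hexp : -(1-δ/2) * Log n ≤ -φ (c n) + H (c n) := by
        rw [hφc]; linarith
      have hpn : Real.exp (-(1-δ/2) * Log n) ≤ 2 * p n := by
        calc Real.exp (-(1-δ/2) * Log n) ≤ Real.exp (-φ (c n) + H (c n)) :=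
          Real.exp_le_exp.mpr hexp
          _ ≤ 2 * p n := h1.2
      have hrw : Real.exp (-(1-δ/2) * Log n) = (n:ℝ) ^ (-(1-δ/2)) := by
        rw [hLogeq n hn3, Real.rpow_def_of_pos hnpos]
        ring_nf
      have hnpn : (1/2) * (n:ℝ) ^ (δ/2) ≤ (n:ℝ) * p n := by
        have h5 : (n:ℝ) ^ (-(1-δ/2)) ≤ 2 * p n := hrw ▸ hpn
        have h6 : (n:ℝ) * (n:ℝ) ^ (-(1-δ/2)) = (n:ℝ) ^ (δ/2) := by
          rw [show (n:ℝ) * (n:ℝ) ^ (-(1-δ/2)) = (n:ℝ) ^ (1:ℝ) * (n:ℝ) ^ (-(1-δ/2)) by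
            rw [Real.rpow_one], ← Real.rpow_add hnpos]
          norm_num
        nlinarith
      have hCn : (μ (Cs n)).toReal ≤ Real.exp (-((n:ℝ) * p n)) := by
        rw [hCeq n]
        calc (1 - p n) ^ n ≤ Real.exp (-(p n)) ^ n := by
              apply pow_le_pow_left₀ (by linarith [hp1 n])
              linarith [Real.add_one_le_exp (-(p n))]
          _ = Real.exp (-((n:ℝ) * p n)) := by
              rw [← Real.exp_nat_mul]; ring_nf
      have hlog : Real.log (n:ℝ) ≤ (1/4) * (n:ℝ) ^ (δ/2) := by
        have := hlon
        rw [Real.norm_eq_abs, Real.norm_eq_abs, abs_of_nonneg (Real.log_nonneg (by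
          exact_mod_cast le_trans (by norm_num) hn3)),
          abs_of_nonneg (Real.rpow_nonneg hnpos.le _)] at this
        linarith
      have hrw2 : (n:ℝ) ^ (-(2:ℝ)) = Real.exp (-(2 * Real.log (n:ℝ))) := by
        rw [Real.rpow_def_of_pos hnpos]
        ring_nf
      calc (μ (Cs n)).toReal ≤ Real.exp (-((n:ℝ) * p n)) := hCn
        _ ≤ Real.exp (-(2 * Real.log (n:ℝ))) := by
            apply Real.exp_le_exp.mpr
            nlinarith
        _ = (n:ℝ) ^ (-(2:ℝ)) := hrw2.symm
    have hsummand : Summable (fun n : ℕ => (n:ℝ) ^ (-(2:ℝ))) :=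
      Real.summable_nat_rpow.mpr (by norm_num)
    obtain ⟨N, hN⟩ := eventually_atTop.mp hkey
    have hTsum : Summable (fun n : ℕ => (μ (Cs n)).toReal) := by
      rw [← summable_nat_add_iff N]
      apply Summable.of_nonneg_of_le (fun k => ENNReal.toReal_nonneg)
        (fun k => hN (k+N) (Nat.le_add_left N k))
      exact (summable_nat_add_iff N).mpr hsummand
    have hsum : (∑' n, μ (Cs n)) ≠ ⊤ := by
      rw [show (fun n => μ (Cs n)) = fun n => ((μ (Cs n)).toNNReal : ℝ≥0∞) from
        funext fun n => (ENNReal.coe_toNNReal (measure_ne_top μ _)).symm]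
      rw [ENNReal.tsum_coe_ne_top_iff_summable]
      exact NNReal.summable_coe.mp (by simpa [ENNReal.coe_toNNReal, measure_ne_top, ENNReal.coe_toNNReal_eq_toReal] using hTsum)
    filter_upwards [ae_eventually_notMem hsum] with ω hω
    have e3 : ∀ᶠ n : ℕ in atTop, (1-ε) * ψ (Log n) ≤ ψ ((1-δ) * Log n) :=
      hLogn.eventually hδprop
    filter_upwards [hω, e3] with n h1 h3
    have h1' : ∃ k, k ∈ Finset.range n ∧ ¬ (X k ω ≤ c n) := by
      by_contra hcon
      push_neg at hcon
      exact h1 (Set.mem_iInter₂.mpr fun k hk => hcon k hk)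
    obtain ⟨k, hk, hck⟩ := h1'
    rw [Finset.mem_range] at hk
    have hn0 : n ≠ 0 := by omega
    rw [pmax, dif_neg hn0]
    calc (1-ε) * ψ (Log n) ≤ c n := h3
      _ ≤ X k ω := (not_le.mp hck).le
      _ ≤ _ := Finset.le_sup' (fun k => X k ω) (Finset.mem_range.mpr hk)
  -- combine
  have hcomb : ∀ᵐ ω ∂μ, ∀ m : ℕ,
      (∀ᶠ n : ℕ in atTop, pmax X n ω ≤ (1 + 1/((m:ℝ)+1)) * ψ (Log n)) ∧
      (∀ᶠ n : ℕ in atTop, (1 - 1/((m:ℝ)+1)) * ψ (Log n) ≤ pmax X n ω) := by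
    rw [ae_all_iff]
    intro m
    exact (upper _ (by positivity)).and (lower _ (by positivity))
  filter_upwards [hcomb] with ω hω
  rw [Metric.tendsto_atTop]
  intro e he
  obtain ⟨m, hm⟩ := exists_nat_one_div_lt he
  have hev := ((hω m).1.and ((hω m).2.and ((hψtop.comp hLogn).eventually_ge_atTop 1)))
  obtain ⟨N, hN⟩ := eventually_atTop.mp hev
  refine ⟨N, fun n hn => ?_⟩
  obtain ⟨h1, h2, h3⟩ := hN n hn
  simp only [Function.comp_apply] at h3
  have hψpos : (0:ℝ) < ψ (Log n) := by linarith
  have hub : pmax X n ω / ψ (Log n) ≤ 1 + 1/((m:ℝ)+1) :=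
    (div_le_iff₀ hψpos).mpr (by linarith)
  have hlb : 1 - 1/((m:ℝ)+1) ≤ pmax X n ω / ψ (Log n) :=
    (le_div_iff₀ hψpos).mpr (by linarith)
  rw [Real.dist_eq, abs_lt]
  constructor <;> [linarith; linarith]
end
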